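/- arXiv:2511.09002 — 6 statements merged into one kernel-verified Lean document; each statement's English description precedes it below -/
import Mathlib

section
/- Let Y₁ > 0 be a fixed positive random variable and Y₂, Y₃, … i.i.d. positive random variables (independent of Y₁) with E[Y₂] < ∞ and E[1/Y₂] < ∞, and E[Y₁] < ∞, E[Y₁/Y₂] < ∞. Then K·Y₁/(Y₁ + ∑_{k=2}^K Y_k) → Y₁/E[Y₂] almost surely and in L¹ as K → ∞. -/
open MeasureTheory ProbabilityTheory Filter Topology

private lemma card_sq_le_sum_mul_sum_inv {ι : Type*} (s : Finset ι) (a : ι → ℝ)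
    (ha : ∀ i ∈ s, 0 < a i) :
    (s.card : ℝ) ^ 2 ≤ (∑ i ∈ s, a i) * ∑ i ∈ s, (a i)⁻¹ := by
  have h := Finset.sum_sq_le_sum_mul_sum_of_sq_eq_mul s (r := fun _ => (1 : ℝ)) (f := a)
    (g := fun i => (a i)⁻¹) (fun i hi => (ha i hi).le)
    (fun i hi => inv_nonneg.2 (ha i hi).le)
    (fun i hi => by rw [one_pow, mul_inv_cancel₀ (ha i hi).ne'])
  simpa using h

private lemma tendsto_trunc_integral {Ω : Type*} [MeasurableSpace Ω] (μ : Measure Ω)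
    {Z : Ω → ℝ} (hZm : Measurable Z) (hZ : Integrable Z μ) :
    Tendsto (fun n : ℕ => ∫ ω, (if (n : ℝ) < Z ω then Z ω else 0) ∂μ) atTop (𝓝 0) := by
  have h := tendsto_integral_of_dominated_convergence (μ := μ)
      (F := fun n : ℕ => fun ω => if (n : ℝ) < Z ω then Z ω else 0) (f := fun _ => (0 : ℝ))
      (bound := fun ω => |Z ω|)
      (fun n => (Measurable.ite (measurableSet_lt measurable_const hZm) hZm
        measurable_const).aestronglyMeasurable) hZ.abs
      (fun n => Filter.Eventually.of_forall fun ω => by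
        by_cases h : (n : ℝ) < Z ω <;> simp [h, abs_nonneg, le_abs_self])
      (Filter.Eventually.of_forall fun ω => by
        apply tendsto_const_nhds.congr'
        filter_upwards [Filter.eventually_ge_atTop ⌈Z ω⌉₊] with n hn
        rw [if_neg (not_lt.2 ((Nat.le_ceil _).trans (Nat.cast_le.2 hn)))])
  simpa using h

/-- Mean-field limit of the softmax weight: if `Y₀ > 0` and `Y₁, Y₂, …` are
i.i.d. positive random variables independent of `Y₀`, with `E[Y₁] < ∞`,
`E[1/Y₁] < ∞`, `E[Y₀] < ∞` and `E[Y₀/Y₁] < ∞`, then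
`K·Y₀/(Y₀ + ∑_{k=1}^{K-1} Y_k) → Y₀/E[Y₁]` almost surely and in `L¹`. -/
theorem softmax_weight_L1_limit
    {Ω : Type*} [MeasurableSpace Ω] (μ : Measure Ω) [IsProbabilityMeasure μ]
    (Y : ℕ → Ω → ℝ)
    (hmeas : ∀ k, Measurable (Y k))
    (hpos : ∀ k ω, 0 < Y k ω)
    (hindep : iIndepFun Y μ)
    (hid : ∀ k, 1 ≤ k → Measure.map (Y k) μ = Measure.map (Y 1) μ)
    (hY1 : Integrable (Y 1) μ)
    (hY1inv : Integrable (fun ω => (Y 1 ω)⁻¹) μ)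
    (hY0 : Integrable (Y 0) μ)
    (hY0Y1 : Integrable (fun ω => Y 0 ω / Y 1 ω) μ) :
    (∀ᵐ ω ∂μ, Tendsto
        (fun K : ℕ => (K : ℝ) * Y 0 ω / (Y 0 ω + ∑ k ∈ Finset.Ico 1 K, Y k ω))
        atTop (nhds (Y 0 ω / ∫ ω', Y 1 ω' ∂μ)))
    ∧ Tendsto
        (fun K : ℕ => ∫ ω, |(K : ℝ) * Y 0 ω / (Y 0 ω + ∑ k ∈ Finset.Ico 1 K, Y k ω)
            - Y 0 ω / ∫ ω', Y 1 ω' ∂μ| ∂μ)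
        atTop (nhds 0) := by
  set m : ℝ := ∫ ω', Y 1 ω' ∂μ with hm_def
  set f : ℕ → Ω → ℝ :=
    fun K ω => (K : ℝ) * Y 0 ω / (Y 0 ω + ∑ k ∈ Finset.Ico 1 K, Y k ω) with hf_def
  set g : Ω → ℝ := fun ω => Y 0 ω / m with hg_def
  -- positivity of the mean
  have hm_pos : 0 < m := by
    rcases (integral_nonneg (f := Y 1) (fun ω => (hpos 1 ω).le)).lt_or_eq with h | h
    · exact h
    · exfalso
      have h0 : ∀ᵐ ω ∂μ, Y 1 ω = 0 :=
        (integral_eq_zero_iff_of_nonneg (fun ω => (hpos 1 ω).le) hY1).1 h.symm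
      have : IsProbabilityMeasure μ := inferInstance
      haveI : (Filter.NeBot (ae μ)) := ae_neBot.2 (IsProbabilityMeasure.ne_zero μ)
      obtain ⟨ω, hω⟩ := h0.exists
      exact (hpos 1 ω).ne' hω
  -- identical distribution
  have hident : ∀ k, 1 ≤ k → IdentDistrib (Y k) (Y 1) μ μ :=
    fun k hk => ⟨(hmeas k).aemeasurable, (hmeas 1).aemeasurable, hid k hk⟩
  -- strong law of large numbers for the shifted sequence
  have hSLLN : ∀ᵐ ω ∂μ,
      Tendsto (fun n : ℕ => (∑ i ∈ Finset.range n, Y (i + 1) ω) / n) atTop (𝓝 m) := by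
    have h := strong_law_ae_real (μ := μ) (fun i => Y (i + 1)) hY1
      (fun i j hij => hindep.indepFun (by omega))
      (fun i => (hident (i + 1) (by omega)).trans (hident 1 le_rfl).symm)
    simpa using h
  -- a.e. convergence
  have hae : ∀ᵐ ω ∂μ, Tendsto (fun K : ℕ => f K ω) atTop (𝓝 (g ω)) := by
    filter_upwards [hSLLN] with ω hω
    have hD2 : Tendsto (fun K : ℕ => (∑ k ∈ Finset.Ico 1 K, Y k ω) / K) atTop (𝓝 m) := by
      have hcomp : Tendsto (fun K : ℕ =>
          (∑ i ∈ Finset.range (K - 1), Y (i + 1) ω) / ((K - 1 : ℕ) : ℝ)) atTop (𝓝 m) :=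
        hω.comp (tendsto_sub_atTop_nat 1)
      have hfrac : Tendsto (fun K : ℕ => ((K - 1 : ℕ) : ℝ) / K) atTop (𝓝 1) := by
        have h1 : Tendsto (fun K : ℕ => 1 - (K : ℝ)⁻¹) atTop (𝓝 1) := by
          simpa using (tendsto_const_nhds : Tendsto (fun _ : ℕ => (1 : ℝ)) atTop (𝓝 1)).sub tendsto_inv_atTop_nhds_zero_nat
        apply h1.congr'
        filter_upwards [Filter.eventually_ge_atTop 1] with K hK
        have hK0 : (K : ℝ) ≠ 0 := Nat.cast_ne_zero.2 (by omega)
        rw [Nat.cast_sub hK, Nat.cast_one, sub_div, div_self hK0, one_div]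
      have hmul := hcomp.mul hfrac
      rw [mul_one] at hmul
      apply hmul.congr'
      filter_upwards [Filter.eventually_ge_atTop 2] with K hK
      have hKm1 : ((K - 1 : ℕ) : ℝ) ≠ 0 := Nat.cast_ne_zero.2 (by omega)
      have hsum : ∑ k ∈ Finset.Ico 1 K, Y k ω = ∑ i ∈ Finset.range (K - 1), Y (i + 1) ω := by
        rw [Finset.sum_Ico_eq_sum_range]
        exact Finset.sum_congr rfl fun i _ => by rw [add_comm]
      rw [div_mul_div_comm, mul_comm ((K - 1 : ℕ) : ℝ) (K : ℝ), mul_div_mul_right _ _ hKm1, hsum]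
    have hD : Tendsto (fun K : ℕ => (Y 0 ω + ∑ k ∈ Finset.Ico 1 K, Y k ω) / K) atTop (𝓝 m) := by
      have h := (tendsto_const_div_atTop_nhds_zero_nat (Y 0 ω)).add hD2
      rw [zero_add] at h
      exact h.congr fun K => (add_div _ _ _).symm
    have hfin : Tendsto (fun K : ℕ => Y 0 ω / ((Y 0 ω + ∑ k ∈ Finset.Ico 1 K, Y k ω) / K))
        atTop (𝓝 (Y 0 ω / m)) := tendsto_const_nhds.div hD hm_pos.ne'
    exact hfin.congr fun K => by
      rw [div_div_eq_mul_div, mul_comm (Y 0 ω) ((K : ℕ) : ℝ)]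
  -- basic properties of f
  have hf_meas : ∀ K, Measurable (f K) := fun K =>
    (measurable_const.mul (hmeas 0)).div
      ((hmeas 0).add (Finset.measurable_sum _ fun k _ => hmeas k))
  have hf_nonneg : ∀ K ω, 0 ≤ f K ω := fun K ω =>
    div_nonneg (mul_nonneg (Nat.cast_nonneg K) (hpos 0 ω).le)
      (add_nonneg (hpos 0 ω).le (Finset.sum_nonneg fun k _ => (hpos k ω).le))
  have hf_le : ∀ K ω, f K ω ≤ (K : ℝ) := by
    intro K ω
    have hd : 0 < Y 0 ω + ∑ k ∈ Finset.Ico 1 K, Y k ω :=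
      add_pos_of_pos_of_nonneg (hpos 0 ω) (Finset.sum_nonneg fun k _ => (hpos k ω).le)
    show (K : ℝ) * Y 0 ω / (Y 0 ω + ∑ k ∈ Finset.Ico 1 K, Y k ω) ≤ (K : ℝ)
    rw [div_le_iff₀ hd]
    have h1 : Y 0 ω ≤ Y 0 ω + ∑ k ∈ Finset.Ico 1 K, Y k ω :=
      le_add_of_nonneg_right (Finset.sum_nonneg fun k _ => (hpos k ω).le)
    exact mul_le_mul_of_nonneg_left h1 (Nat.cast_nonneg K)
  have hf_int : ∀ K, Integrable (f K) μ := fun K =>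
    (integrable_const ((K : ℕ) : ℝ)).mono' (hf_meas K).aestronglyMeasurable
      (Filter.Eventually.of_forall fun ω => by
        rw [Real.norm_eq_abs, abs_of_nonneg (hf_nonneg K ω)]; exact hf_le K ω)
  -- the ratios Z k = Y 0 / Y k
  set Z : ℕ → Ω → ℝ := fun k ω => Y 0 ω / Y k ω with hZ_def
  have hZmeas : ∀ k, Measurable (Z k) := fun k => (hmeas 0).div (hmeas k)
  have hZnonneg : ∀ k ω, 0 ≤ Z k ω := fun k ω => div_nonneg (hpos 0 ω).le (hpos k ω).le
  have hpairid : ∀ k, 1 ≤ k →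
      IdentDistrib (fun ω => (Y 0 ω, Y k ω)) (fun ω => (Y 0 ω, Y 1 ω)) μ μ := by
    intro k hk
    have h0k : IndepFun (Y 0) (Y k) μ := hindep.indepFun (by omega)
    have h01 : IndepFun (Y 0) (Y 1) μ := hindep.indepFun (by omega)
    refine ⟨((hmeas 0).prodMk (hmeas k)).aemeasurable,
      ((hmeas 0).prodMk (hmeas 1)).aemeasurable, ?_⟩
    rw [(indepFun_iff_map_prod_eq_prod_map_map (hmeas 0).aemeasurable
          (hmeas k).aemeasurable).1 h0k,
        (indepFun_iff_map_prod_eq_prod_map_map (hmeas 0).aemeasurable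
          (hmeas 1).aemeasurable).1 h01, hid k hk]
  have hZid : ∀ k, 1 ≤ k → IdentDistrib (Z k) (Z 1) μ μ := fun k hk =>
    (hpairid k hk).comp (measurable_fst.div measurable_snd)
  have hZint : ∀ k, 1 ≤ k → Integrable (Z k) μ := fun k hk =>
    (hZid k hk).integrable_iff.2 hY0Y1
  -- truncations of Z k
  have htr_meas : ∀ (c : ℝ) k, Measurable (fun ω => if c < Z k ω then Z k ω else 0) :=
    fun c k => Measurable.ite (measurableSet_lt measurable_const (hZmeas k)) (hZmeas k)
      measurable_const
  have htr_nonneg : ∀ (c : ℝ) k ω, 0 ≤ (if c < Z k ω then Z k ω else 0) := fun c k ω => by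
    split
    · exact hZnonneg k ω
    · exact le_rfl
  have htr_int : ∀ (c : ℝ) k, 1 ≤ k →
      Integrable (fun ω => if c < Z k ω then Z k ω else 0) μ := fun c k hk =>
    (hZint k hk).mono' (htr_meas c k).aestronglyMeasurable
      (Filter.Eventually.of_forall fun ω => by
        rw [Real.norm_eq_abs, abs_of_nonneg (htr_nonneg c k ω)]
        split
        · exact le_rfl
        · exact hZnonneg k ω)
  have htr_eq : ∀ (c : ℝ) k, 1 ≤ k →
      (∫ ω, (if c < Z k ω then Z k ω else 0) ∂μ)
        = ∫ ω, (if c < Z 1 ω then Z 1 ω else 0) ∂μ := by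
    intro c k hk
    have hφ : Measurable (fun z : ℝ => if c < z then z else 0) :=
      Measurable.ite (measurableSet_lt measurable_const measurable_id) measurable_id
        measurable_const
    exact ((hZid k hk).comp hφ).integral_eq
  have htrunc_tendsto :
      Tendsto (fun n : ℕ => ∫ ω, (if (n : ℝ) < Z 1 ω then Z 1 ω else 0) ∂μ) atTop (𝓝 0) :=
    tendsto_trunc_integral μ (hZmeas 1) (hZint 1 le_rfl)
  -- uniform integrability
  have hUI : UnifIntegrable f 1 μ := by
    intro ε hε
    obtain ⟨c, hc⟩ : ∃ c : ℕ, ∫ ω, (if (c : ℝ) < Z 1 ω then Z 1 ω else 0) ∂μ < ε / 4 :=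
      (htrunc_tendsto.eventually (gt_mem_nhds (by positivity : (0 : ℝ) < ε / 4))).exists
    refine ⟨ε / (4 * (c + 1)), by positivity, fun K s hs hμs => ?_⟩
    have hμs' : (μ s).toReal ≤ ε / (4 * (c + 1)) :=
      ENNReal.toReal_le_of_le_ofReal (by positivity) hμs
    have hδε : ε / (4 * ((c : ℝ) + 1)) ≤ ε := by
      apply div_le_self hε.le
      have : (0:ℝ) ≤ (c : ℝ) := Nat.cast_nonneg c
      nlinarith
    have key : ∫ ω in s, f K ω ∂μ ≤ ε := by
      rcases lt_or_ge K 2 with hK | hK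
      · interval_cases K
        · have h0 : ∀ ω, f 0 ω = 0 := fun ω => by
            show ((0 : ℕ) : ℝ) * Y 0 ω / _ = 0
            simp
          simp only [h0, integral_zero]
          exact hε.le
        · have h1 : ∀ ω, f 1 ω = 1 := fun ω => by
            show ((1 : ℕ) : ℝ) * Y 0 ω / (Y 0 ω + ∑ k ∈ Finset.Ico 1 1, Y k ω) = 1
            simp [div_self (hpos 0 ω).ne']
          simp only [h1]
          rw [setIntegral_const, smul_eq_mul, mul_one]
          exact hμs'.trans hδε
      · have hKr : (2 : ℝ) ≤ (K : ℝ) := by exact_mod_cast hK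
        have hd1 : (1 : ℝ) ≤ (K : ℝ) - 1 := by linarith
        have hd0 : (0 : ℝ) < (K : ℝ) - 1 := by linarith
        -- pointwise domination
        have hptw : ∀ ω, f K ω ≤ 2 / ((K : ℝ) - 1) * ∑ k ∈ Finset.Ico 1 K, Z k ω := by
          intro ω
          have hSpos : 0 < ∑ k ∈ Finset.Ico 1 K, Y k ω :=
            Finset.sum_pos (fun k _ => hpos k ω) (by rw [Finset.nonempty_Ico]; omega)
          have hTpos : 0 < ∑ k ∈ Finset.Ico 1 K, (Y k ω)⁻¹ :=
            Finset.sum_pos (fun k _ => inv_pos.2 (hpos k ω)) (by rw [Finset.nonempty_Ico]; omega)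
          have hCS : ((K : ℝ) - 1) ^ 2 ≤
              (∑ k ∈ Finset.Ico 1 K, Y k ω) * ∑ k ∈ Finset.Ico 1 K, (Y k ω)⁻¹ := by
            have h := card_sq_le_sum_mul_sum_inv (Finset.Ico 1 K) (fun k => Y k ω)
              (fun k _ => hpos k ω)
            rwa [Nat.card_Ico, Nat.cast_sub (by omega), Nat.cast_one] at h
          have hZsum : ∑ k ∈ Finset.Ico 1 K, Z k ω
              = Y 0 ω * ∑ k ∈ Finset.Ico 1 K, (Y k ω)⁻¹ := by
            rw [Finset.mul_sum]
            exact Finset.sum_congr rfl fun k _ => div_eq_mul_inv _ _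
          have step1 : f K ω ≤ (K : ℝ) * Y 0 ω / ∑ k ∈ Finset.Ico 1 K, Y k ω := by
            show (K : ℝ) * Y 0 ω / (Y 0 ω + ∑ k ∈ Finset.Ico 1 K, Y k ω) ≤ _
            exact div_le_div_of_nonneg_left
              (mul_nonneg (Nat.cast_nonneg K) (hpos 0 ω).le) hSpos
              (le_add_of_nonneg_left (hpos 0 ω).le)
          refine step1.trans ?_
          rw [hZsum, div_le_iff₀ hSpos, div_mul_eq_mul_div, div_mul_eq_mul_div,
            le_div_iff₀ hd0]
          nlinarith [mul_le_mul_of_nonneg_left hCS (mul_nonneg (by norm_num : (0:ℝ) ≤ 2) (hpos 0 ω).le),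
            mul_le_mul_of_nonneg_right (by linarith : (K : ℝ) ≤ 2 * ((K:ℝ) - 1))
              (mul_nonneg (hpos 0 ω).le (by linarith : (0:ℝ) ≤ (K:ℝ) - 1))]
        have hbnd_int : Integrable (fun ω => 2 / ((K : ℝ) - 1) * ∑ k ∈ Finset.Ico 1 K, Z k ω) μ :=
          (integrable_finset_sum _ fun k hk => hZint k (Finset.mem_Ico.1 hk).1).const_mul _
        have h1 : ∫ ω in s, f K ω ∂μ
            ≤ ∫ ω in s, 2 / ((K : ℝ) - 1) * ∑ k ∈ Finset.Ico 1 K, Z k ω ∂μ :=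
          setIntegral_mono (hf_int K).integrableOn hbnd_int.integrableOn hptw
        have h2 : ∫ ω in s, 2 / ((K : ℝ) - 1) * ∑ k ∈ Finset.Ico 1 K, Z k ω ∂μ
            = 2 / ((K : ℝ) - 1) * ∑ k ∈ Finset.Ico 1 K, ∫ ω in s, Z k ω ∂μ := by
          rw [integral_const_mul,
            integral_finset_sum _ fun k hk => (hZint k (Finset.mem_Ico.1 hk).1).integrableOn]
        have h3 : ∀ k ∈ Finset.Ico 1 K, ∫ ω in s, Z k ω ∂μ
            ≤ ε / 4 + (c : ℝ) * (ε / (4 * (c + 1))) := by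
          intro k hk'
          have hk : 1 ≤ k := (Finset.mem_Ico.1 hk').1
          have hA : ∫ ω in s, Z k ω ∂μ
              ≤ ∫ ω in s, ((if (c : ℝ) < Z k ω then Z k ω else 0) + c) ∂μ := by
            refine setIntegral_mono (hZint k hk).integrableOn
              ((htr_int c k hk).add (integrable_const _)).integrableOn fun ω => ?_
            dsimp only
            split
            · exact le_add_of_nonneg_right (Nat.cast_nonneg c)
            · next h => rw [zero_add]; exact (not_lt.1 h)
          have hB : ∫ ω in s, ((if (c : ℝ) < Z k ω then Z k ω else 0) + c) ∂μ
              = ∫ ω in s, (if (c : ℝ) < Z k ω then Z k ω else 0) ∂μ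
                + (c : ℝ) * (μ s).toReal := by
            rw [integral_add (htr_int c k hk).integrableOn (integrable_const _),
              setIntegral_const, smul_eq_mul, mul_comm]
            rfl
          have hC : ∫ ω in s, (if (c : ℝ) < Z k ω then Z k ω else 0) ∂μ
              ≤ ∫ ω, (if (c : ℝ) < Z k ω then Z k ω else 0) ∂μ :=
            setIntegral_le_integral (htr_int c k hk)
              (Filter.Eventually.of_forall (htr_nonneg (c : ℝ) k))
          have hD : ∫ ω, (if (c : ℝ) < Z k ω then Z k ω else 0) ∂μ < ε / 4 := by
            rw [htr_eq (c : ℝ) k hk]; exact hc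
          have hE : (c : ℝ) * (μ s).toReal ≤ (c : ℝ) * (ε / (4 * (c + 1))) :=
            mul_le_mul_of_nonneg_left hμs' (Nat.cast_nonneg c)
          calc ∫ ω in s, Z k ω ∂μ
              ≤ ∫ ω in s, (if (c : ℝ) < Z k ω then Z k ω else 0) ∂μ
                + (c : ℝ) * (μ s).toReal := by rw [← hB]; exact hA
            _ ≤ ε / 4 + (c : ℝ) * (ε / (4 * (c + 1))) :=
                add_le_add (hC.trans hD.le) hE
        have h4 : ∑ k ∈ Finset.Ico 1 K, ∫ ω in s, Z k ω ∂μ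
            ≤ ((K : ℝ) - 1) * (ε / 4 + (c : ℝ) * (ε / (4 * (c + 1)))) := by
          have := Finset.sum_le_card_nsmul (Finset.Ico 1 K) _ _ h3
          rw [Nat.card_Ico, nsmul_eq_mul, Nat.cast_sub (by omega), Nat.cast_one] at this
          exact this
        have hcc : (c : ℝ) * (ε / (4 * (c + 1))) ≤ ε / 4 := by
          rw [mul_div_assoc']
          rw [div_le_div_iff₀ (by positivity) (by norm_num : (0:ℝ) < 4)]
          have h0c : (0:ℝ) ≤ (c : ℝ) := Nat.cast_nonneg c
          nlinarith
        calc ∫ ω in s, f K ω ∂μ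
            ≤ 2 / ((K : ℝ) - 1) * ∑ k ∈ Finset.Ico 1 K, ∫ ω in s, Z k ω ∂μ := h1.trans h2.le
          _ ≤ 2 / ((K : ℝ) - 1) * (((K : ℝ) - 1) * (ε / 4 + (c : ℝ) * (ε / (4 * (c + 1))))) := by
              apply mul_le_mul_of_nonneg_left h4 (by positivity)
          _ = 2 * (ε / 4 + (c : ℝ) * (ε / (4 * (c + 1)))) := by
              rw [← mul_assoc, div_mul_cancel₀ _ hd0.ne']
          _ ≤ 2 * (ε / 4 + ε / 4) := by linarith
          _ = ε := by ring
    -- convert to eLpNorm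
    rw [eLpNorm_indicator_eq_eLpNorm_restrict hs, eLpNorm_one_eq_lintegral_enorm,
      ← ofReal_integral_norm_eq_lintegral_enorm (hf_int K).restrict]
    apply ENNReal.ofReal_le_ofReal
    calc ∫ ω in s, ‖f K ω‖ ∂μ = ∫ ω in s, f K ω ∂μ := by
          refine integral_congr_ae (Filter.Eventually.of_forall fun ω => ?_)
          simp [Real.norm_eq_abs, abs_of_nonneg (hf_nonneg K ω)]
      _ ≤ ε := key
  -- Vitali convergence theorem
  have hg_int : Integrable g μ := hY0.div_const m
  have hTIM : TendstoInMeasure μ f atTop g :=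
    tendstoInMeasure_of_tendsto_ae (fun K => (hf_meas K).aestronglyMeasurable) hae
  have hLp : Tendsto (fun K => eLpNorm (f K - g) 1 μ) atTop (𝓝 0) :=
    tendsto_Lp_finite_of_tendstoInMeasure le_rfl ENNReal.one_ne_top
      (fun K => (hf_meas K).aestronglyMeasurable) (memLp_one_iff_integrable.2 hg_int) hUI hTIM
  refine ⟨hae, ?_⟩
  have heq : ∀ K : ℕ,
      ∫ ω, |(K : ℝ) * Y 0 ω / (Y 0 ω + ∑ k ∈ Finset.Ico 1 K, Y k ω) - Y 0 ω / m| ∂μ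
        = (eLpNorm (f K - g) 1 μ).toReal := by
    intro K
    rw [eLpNorm_one_eq_lintegral_enorm,
      ← ofReal_integral_norm_eq_lintegral_enorm ((hf_int K).sub hg_int),
      ENNReal.toReal_ofReal (integral_nonneg fun ω => norm_nonneg _)]
    refine integral_congr_ae (Filter.Eventually.of_forall fun ω => ?_)
    simp [Real.norm_eq_abs, hf_def, hg_def]
  have h0 := (ENNReal.tendsto_toReal ENNReal.zero_ne_top).comp hLp
  rw [ENNReal.toReal_zero] at h0
  exact h0.congr fun K => (heq K).symm
end

section
/- Let Q : X → (0, Q*] with ess sup Q = Q* < ∞, and let p_{t+1} = p_t·Q/E_{p_t}[Q] be the mean-field self-consuming update with E_{p₀}[Q] > 0 and P₀({Q = Q*}) > 0. Then lim_{t→∞} E_{X∼p_t}[Q(X)] = Q*. -/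
open MeasureTheory Filter

/-- Under the mean-field self-consuming update `p_{t+1} = p_t·Q/E_{p_t}[Q]`, with
`E_{p₀}[Q] > 0` and positive initial mass on the maximizer set `{Q = Q*}`,
the expected reward converges to `Q*`. -/
theorem selfconsuming_reward_tendsto_max
    {X : Type*} [MeasurableSpace X] (π : Measure X) [SigmaFinite π]
    (Q : X → ℝ) (hQm : Measurable Q)
    (Qstar : ℝ) (hQstar : 0 < Qstar) (hQ : ∀ x, 0 < Q x ∧ Q x ≤ Qstar)
    (p : ℕ → X → ℝ)
    (hp0m : Measurable (p 0)) (hp0nn : ∀ x, 0 ≤ p 0 x)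
    (hp0int : Integrable (p 0) π) (hp0den : ∫ x, p 0 x ∂π = 1)
    (hrec : ∀ t x, p (t + 1) x = p t x * Q x / (∫ y, Q y * p t y ∂π))
    (hC0 : 0 < ∫ x, Q x * p 0 x ∂π)
    (hA : (π.withDensity fun x => ENNReal.ofReal (p 0 x)) {x | Q x = Qstar} ≠ 0) :
    Tendsto (fun t => ∫ x, Q x * p t x ∂π) atTop (nhds Qstar) := by
  classical
  set A : Set X := {x | Q x = Qstar} with hAdef
  have hAmeas : MeasurableSet A := hQm (measurableSet_singleton Qstar)
  -- moments
  set M : ℕ → ℝ := fun t => ∫ x, Q x ^ t * p 0 x ∂π with hMdef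
  have hint : ∀ t, Integrable (fun x => Q x ^ t * p 0 x) π := by
    intro t
    refine Integrable.mono' (hp0int.const_mul (Qstar ^ t))
      (((hQm.pow_const t).mul hp0m).aestronglyMeasurable) (ae_of_all _ fun x => ?_)
    have h1 := (hQ x).1
    have h2 := (hQ x).2
    have h3 := hp0nn x
    have h4 : Q x ^ t ≤ Qstar ^ t := pow_le_pow_left₀ h1.le h2 t
    rw [Real.norm_eq_abs, abs_of_nonneg (by positivity)]
    exact mul_le_mul_of_nonneg_right h4 h3
  -- positive mass on A
  have ha_pos : 0 < ∫ x in A, p 0 x ∂π := by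
    have hwd : (π.withDensity fun x => ENNReal.ofReal (p 0 x)) A
        = ∫⁻ x in A, ENNReal.ofReal (p 0 x) ∂π :=
      withDensity_apply _ hAmeas
    have heq : ENNReal.ofReal (∫ x in A, p 0 x ∂π)
        = ∫⁻ x in A, ENNReal.ofReal (p 0 x) ∂π :=
      MeasureTheory.ofReal_integral_eq_lintegral_ofReal hp0int.restrict
        (ae_of_all _ hp0nn)
    have hne : ENNReal.ofReal (∫ x in A, p 0 x ∂π) ≠ 0 := by
      rw [heq, ← hwd]; exact hA
    by_contra hle
    push_neg at hle
    exact hne (ENNReal.ofReal_eq_zero.2 hle)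
  set a : ℝ := ∫ x in A, p 0 x ∂π with hadef
  -- lower bound on M
  have hMlb : ∀ t, Qstar ^ t * a ≤ M t := by
    intro t
    have h2 : ∫ x in A, Q x ^ t * p 0 x ∂π = Qstar ^ t * a := by
      rw [hadef, ← integral_const_mul]
      refine setIntegral_congr_fun hAmeas fun x hx => ?_
      have : Q x = Qstar := hx
      rw [this]
    rw [← h2]
    exact setIntegral_le_integral (hint t) (ae_of_all _ fun x => by
      have := (hQ x).1.le; have := hp0nn x; positivity)
  have hMpos : ∀ t, 0 < M t := fun t =>
    lt_of_lt_of_le (by positivity) (hMlb t)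
  -- upper bound M (t+1) ≤ Qstar * M t
  have hMub : ∀ t, M (t + 1) ≤ Qstar * M t := by
    intro t
    have : M (t + 1) = ∫ x, Q x ^ (t + 1) * p 0 x ∂π := rfl
    rw [this, ← integral_const_mul]
    refine integral_mono (hint (t + 1)) ((hint t).const_mul Qstar) fun x => ?_
    have h1 := (hQ x).1
    have h2 := (hQ x).2
    have h3 := hp0nn x
    have h4 : (0:ℝ) ≤ Q x ^ t := by positivity
    rw [pow_succ]
    nlinarith [mul_nonneg (mul_nonneg (sub_nonneg.2 h2) h4) h3]
  -- closed form for p t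
  have hform : ∀ t x, p t x = Q x ^ t * p 0 x / M t := by
    intro t
    induction t with
    | zero =>
      intro x
      have hM0 : M 0 = 1 := by
        simp only [hMdef, pow_zero, one_mul, hp0den]
      simp [hM0]
    | succ t ih =>
      have hDt : (∫ y, Q y * p t y ∂π) = M (t + 1) / M t := by
        have hfun : (fun y => Q y * p t y) = fun y => Q y ^ (t + 1) * p 0 y / M t := by
          funext y; rw [ih y, pow_succ]; ring
        rw [hfun, integral_div]
      intro x
      rw [hrec t x, hDt, ih x, pow_succ]
      have h1 := (hMpos t).ne'
      have h2 := (hMpos (t + 1)).ne'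
      field_simp
  -- expected reward is the ratio of moments
  have key : ∀ t, (∫ x, Q x * p t x ∂π) = M (t + 1) / M t := by
    intro t
    have hfun : (fun y => Q y * p t y) = fun y => Q y ^ (t + 1) * p 0 y / M t := by
      funext y; rw [hform t y, pow_succ]; ring
    rw [hfun, integral_div]
  -- the normalized moment sequence
  set g : ℕ → ℝ := fun t => M t / Qstar ^ t with hgdef
  have hgpos : ∀ t, 0 < g t := fun t => div_pos (hMpos t) (by positivity)
  have hga : ∀ t, a ≤ g t := by
    intro t
    rw [hgdef, le_div_iff₀ (by positivity)]
    have := hMlb t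
    linarith [hMlb t]
  have hganti : Antitone g := by
    refine antitone_nat_of_succ_le fun t => ?_
    rw [hgdef]
    rw [div_le_div_iff₀ (by positivity) (by positivity)]
    have := hMub t
    rw [pow_succ]
    nlinarith [hMub t, pow_pos hQstar t]
  have hgbdd : BddBelow (Set.range g) := ⟨a, by rintro _ ⟨t, rfl⟩; exact hga t⟩
  have hgl : Tendsto g atTop (nhds (⨅ t, g t)) := tendsto_atTop_ciInf hganti hgbdd
  set L : ℝ := ⨅ t, g t with hLdef
  have hLpos : 0 < L :=
    lt_of_lt_of_le ha_pos (le_ciInf hga)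
  have h1 : Tendsto (fun t => g (t + 1)) atTop (nhds L) :=
    hgl.comp (tendsto_add_atTop_nat 1)
  have h2 : Tendsto (fun t => Qstar * (g (t + 1) / g t)) atTop (nhds (Qstar * (L / L))) :=
    (h1.div hgl hLpos.ne').const_mul Qstar
  rw [div_self hLpos.ne', mul_one] at h2
  have heq : (fun t => ∫ x, Q x * p t x ∂π) = fun t => Qstar * (g (t + 1) / g t) := by
    funext t
    rw [key t, hgdef]
    simp only
    have hMt := (hMpos t).ne'
    have hMt1 := (hMpos (t + 1)).ne'
    have hq : (Qstar : ℝ) ≠ 0 := hQstar.ne'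
    have hqt : (Qstar : ℝ) ^ t ≠ 0 := pow_ne_zero t hq
    rw [pow_succ]
    field_simp
  rw [heq]
  exact h2
end

section
/- Under the mean-field self-consuming update p_{t+1} = p_t·Q/E_{p_t}[Q] with P₀(A) > 0 where A = {Q = Q*}, the density ratio on A satisfies p_t(x) = P_t(A)·p₀(x)/P₀(A) for all x ∈ A, the KL divergence satisfies D_KL(p* ‖ p_t) = -log P_t(A) where p* = p₀·1_A/P₀(A), and if E_{p_t}[Q] → Q* then D_KL(p* ‖ p_t) → 0 as t → ∞. -/
open MeasureTheory Filter

/-- Under the mean-field self-consuming update `p_{t+1} = p_t·Q/E_{p_t}[Q]` with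
positive initial mass on the maximizer set `A = {Q = Q*}`:
(1) on `A`, `p_t = P_t(A)·p₀/P₀(A)`;
(2) `D_KL(p* ‖ p_t) = -log P_t(A)` where `p* = p₀·1_A/P₀(A)`;
(3) if `E_{p_t}[Q] → Q*` then `D_KL(p* ‖ p_t) → 0`. -/
theorem selfconsuming_KL_convergence
    {X : Type*} [MeasurableSpace X] (π : Measure X) [SigmaFinite π]
    (Q : X → ℝ) (hQm : Measurable Q)
    (Qstar : ℝ) (hQstar : 0 < Qstar) (hQ : ∀ x, 0 < Q x ∧ Q x ≤ Qstar)
    (p : ℕ → X → ℝ)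
    (hp0m : Measurable (p 0)) (hp0nn : ∀ x, 0 ≤ p 0 x)
    (hp0int : Integrable (p 0) π) (hp0den : ∫ x, p 0 x ∂π = 1)
    (hrec : ∀ t x, p (t + 1) x = p t x * Q x / (∫ y, Q y * p t y ∂π))
    (hC0 : 0 < ∫ x, Q x * p 0 x ∂π)
    (A : Set X) (hA : A = {x | Q x = Qstar}) (hAmeas : MeasurableSet A)
    (PA : ℕ → ℝ) (hPA : ∀ t, PA t = ∫ x in A, p t x ∂π)
    (hPA0 : 0 < PA 0) :
    (∀ t, ∀ x ∈ A, p t x = PA t * p 0 x / PA 0)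
    ∧ (∀ t, ∫ x in A, (p 0 x / PA 0) *
          Real.log ((p 0 x / PA 0) / p t x) ∂π = - Real.log (PA t))
    ∧ (Tendsto (fun t => ∫ x, Q x * p t x ∂π) atTop (nhds Qstar) →
        Tendsto (fun t => - Real.log (PA t)) atTop (nhds 0)) := by
  have hAin : ∀ x ∈ A, Q x = Qstar := by
    intro x hx; rw [hA] at hx; exact hx
  set C : ℕ → ℝ := fun t => ∫ x, Q x * p t x ∂π with hCdef
  -- main induction
  have key : ∀ t, Measurable (p t) ∧ (∀ x, 0 ≤ p t x) ∧ Integrable (p t) π ∧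
      (∫ x, p t x ∂π = 1) ∧ 0 < PA t ∧
      (∀ x, PA 0 * p t x ≤ PA t * p 0 x) ∧
      (∀ x ∈ A, PA 0 * p t x = PA t * p 0 x) := by
    intro t
    induction t with
    | zero => exact ⟨hp0m, hp0nn, hp0int, hp0den, hPA0, fun x => le_rfl, fun x _ => rfl⟩
    | succ t ih =>
      obtain ⟨hm, hnn, hint, hden, hpos, hle, heq⟩ := ih
      have hPApos0 : (0:ℝ) < ∫ x in A, p t x ∂π := by rw [← hPA]; exact hpos
      have hQp_int : Integrable (fun x => Q x * p t x) π := by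
        refine (hint.const_mul Qstar).mono' ((hQm.mul hm).aestronglyMeasurable)
          (Eventually.of_forall fun x => ?_)
        have h1 : 0 ≤ Q x * p t x := mul_nonneg (hQ x).1.le (hnn x)
        rw [Real.norm_eq_abs, abs_of_nonneg h1]
        exact mul_le_mul_of_nonneg_right (hQ x).2 (hnn x)
      have hsetA : ∫ x in A, Q x * p t x ∂π = Qstar * PA t := by
        rw [hPA, ← integral_const_mul]
        exact setIntegral_congr_fun hAmeas fun x hx => by rw [hAin x hx]
      have hClb : Qstar * PA t ≤ C t := by
        rw [← hsetA]
        exact setIntegral_le_integral hQp_int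
          (Eventually.of_forall fun x => mul_nonneg (hQ x).1.le (hnn x))
      have hCpos : 0 < C t := lt_of_lt_of_le (mul_pos hQstar hpos) hClb
      have hpdef : p (t + 1) = fun x => p t x * Q x / C t := funext (hrec t)
      have hm' : Measurable (p (t + 1)) := by
        rw [hpdef]; exact (hm.mul hQm).div_const _
      have hnn' : ∀ x, 0 ≤ p (t + 1) x := by
        intro x; rw [hpdef]
        exact div_nonneg (mul_nonneg (hnn x) (hQ x).1.le) hCpos.le
      have hint' : Integrable (p (t + 1)) π := by
        rw [hpdef]
        have : Integrable (fun x => p t x * Q x) π := by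
          simpa [mul_comm] using hQp_int
        exact this.div_const _
      have hden' : ∫ x, p (t + 1) x ∂π = 1 := by
        rw [hpdef]
        simp only [integral_div]
        rw [show (∫ x, p t x * Q x ∂π) = C t by
          rw [hCdef]; exact integral_congr_ae (Eventually.of_forall fun x => mul_comm _ _)]
        exact div_self hCpos.ne'
      have hPAsucc : PA (t + 1) = Qstar / C t * PA t := by
        rw [hPA (t + 1), hPA t, ← integral_const_mul]
        refine setIntegral_congr_fun hAmeas fun x hx => ?_
        rw [hrec t x, hAin x hx]; ring
      have hpos' : 0 < PA (t + 1) := by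
        rw [hPAsucc]; exact mul_pos (div_pos hQstar hCpos) hpos
      have hle' : ∀ x, PA 0 * p (t + 1) x ≤ PA (t + 1) * p 0 x := by
        intro x
        rw [hrec t x, hPAsucc]
        have h1 : PA 0 * p t x * Q x ≤ PA t * p 0 x * Qstar :=
          mul_le_mul (hle x) (hQ x).2 (hQ x).1.le (mul_nonneg hpos.le (hp0nn x))
        calc PA 0 * (p t x * Q x / C t) = PA 0 * p t x * Q x / C t := by ring
          _ ≤ PA t * p 0 x * Qstar / C t :=
              div_le_div_of_nonneg_right h1 hCpos.le
          _ = Qstar / C t * PA t * p 0 x := by ring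
      have heq' : ∀ x ∈ A, PA 0 * p (t + 1) x = PA (t + 1) * p 0 x := by
        intro x hx
        rw [hrec t x, hPAsucc, hAin x hx]
        rw [show PA 0 * (p t x * Qstar / C t) = (PA 0 * p t x) * Qstar / C t by ring,
          heq x hx]
        ring
      exact ⟨hm', hnn', hint', hden', hpos', hle', heq'⟩
  have claim1 : ∀ t, ∀ x ∈ A, p t x = PA t * p 0 x / PA 0 := by
    intro t x hx
    have h := (key t).2.2.2.2.2.2 x hx
    rw [eq_div_iff hPA0.ne']
    linarith
  refine ⟨claim1, ?_, ?_⟩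
  · -- part 2
    intro t
    have hpt : 0 < PA t := (key t).2.2.2.2.1
    have hlog : ∀ x ∈ A, (p 0 x / PA 0) * Real.log ((p 0 x / PA 0) / p t x)
        = -Real.log (PA t) / PA 0 * p 0 x := by
      intro x hx
      rcases eq_or_lt_of_le (hp0nn x) with h0 | h0
      · rw [← h0]; simp
      · rw [claim1 t x hx]
        have hp0ne : p 0 x ≠ 0 := ne_of_gt h0
        have hPAtne : PA t ≠ 0 := hpt.ne'
        have ha : p 0 x / PA 0 ≠ 0 := div_ne_zero hp0ne hPA0.ne'
        have h2 : (p 0 x / PA 0) / (PA t * p 0 x / PA 0) = (PA t)⁻¹ := by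
          rw [show PA t * p 0 x / PA 0 = (p 0 x / PA 0) * (PA t) by ring,
            div_mul_cancel_left₀ ha]
        rw [h2, Real.log_inv]; ring
    calc ∫ x in A, (p 0 x / PA 0) * Real.log ((p 0 x / PA 0) / p t x) ∂π
        = ∫ x in A, -Real.log (PA t) / PA 0 * p 0 x ∂π :=
          setIntegral_congr_fun hAmeas fun x hx => hlog x hx
      _ = -Real.log (PA t) / PA 0 * ∫ x in A, p 0 x ∂π := integral_const_mul _ _
      _ = -Real.log (PA t) := by rw [← hPA 0]; field_simp
  · -- part 3
    intro hconv
    -- first: PA t ≤ 1 and 1 - PA t = ∫ over Aᶜ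
    have hPAle1 : ∀ t, PA t ≤ 1 := by
      intro t
      rw [hPA t, ← (key t).2.2.2.1]
      exact setIntegral_le_integral (key t).2.2.1
        (Eventually.of_forall fun x => (key t).2.1 x)
    have hcompl : ∀ t, ∫ x in Aᶜ, p t x ∂π = 1 - PA t := by
      intro t
      have := integral_add_compl hAmeas (key t).2.2.1
      rw [(key t).2.2.2.1, ← hPA t] at this
      linarith
    -- the shrinking sets
    set S : ℝ → Set X := fun ε => Q ⁻¹' Set.Ioo (Qstar - ε) Qstar with hSdef
    have hSmeas : ∀ ε, MeasurableSet (S ε) := fun ε => hQm measurableSet_Ioo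
    have hT : Tendsto (fun n : ℕ => ∫ x in S (1 / (n + 1)), p 0 x ∂π) atTop (nhds 0) := by
      have hanti : Antitone (fun n : ℕ => S (1 / (n + 1 : ℝ))) := by
        intro m n hmn x hx
        simp only [hSdef, Set.mem_preimage, Set.mem_Ioo] at hx ⊢
        refine ⟨lt_of_le_of_lt ?_ hx.1, hx.2⟩
        have h1 : (1 : ℝ) / (n + 1) ≤ 1 / (m + 1) := by
          apply one_div_le_one_div_of_le (by positivity)
          exact_mod_cast Nat.succ_le_succ hmn
        linarith
      have hinter : (⋂ n : ℕ, S (1 / (n + 1 : ℝ))) = ∅ := by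
        ext x
        simp only [Set.mem_iInter, hSdef, Set.mem_preimage, Set.mem_Ioo, Set.mem_empty_iff_false,
          iff_false, not_forall]
        by_contra hcon
        push_neg at hcon
        have hlt : Q x < Qstar := (hcon 0).2
        obtain ⟨n, hn⟩ := exists_nat_gt (1 / (Qstar - Q x))
        have hpos : 0 < Qstar - Q x := by linarith
        have h1 : 1 / ((n : ℝ) + 1) < Qstar - Q x := by
          rw [div_lt_iff₀ (by positivity)]
          rw [div_lt_iff₀ hpos] at hn
          nlinarith
        have := (hcon n).1
        linarith
      have := tendsto_setIntegral_of_antitone (f := p 0) (μ := π)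
        (fun n : ℕ => hSmeas (1 / (n + 1 : ℝ))) hanti ⟨0, hp0int.integrableOn⟩
      rwa [hinter, Measure.restrict_empty, integral_zero_measure] at this
    -- convergence of PA to 1
    have hPAto1 : Tendsto PA atTop (nhds 1) := by
      rw [tendsto_order]
      constructor
      · intro b hb
        have hδ : 0 < (1 - b) := by linarith
        -- choose n with small tail integral
        have h2 : ∀ᶠ n : ℕ in atTop,
            ∫ x in S (1 / (n + 1)), p 0 x ∂π < (1 - b) * PA 0 / 2 := by
          exact hT.eventually (eventually_lt_nhds (show (0:ℝ) < (1 - b) * PA 0 / 2 by nlinarith))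
        obtain ⟨n, hn⟩ := h2.exists
        set ε : ℝ := 1 / (n + 1 : ℝ) with hεdef
        have hεpos : 0 < ε := by positivity
        -- eventually C t is close to Qstar
        have h3 : ∀ᶠ t in atTop, Qstar - C t < ε * (1 - b) / 2 := by
          have : ∀ᶠ t in atTop, C t ∈ Set.Ioi (Qstar - ε * (1 - b) / 2) :=
            hconv.eventually (Ioi_mem_nhds (by nlinarith))
          exact this.mono fun t ht => by simp only [Set.mem_Ioi] at ht; linarith
        refine h3.mono fun t ht => ?_
        -- split Aᶜ
        set B : Set X := Q ⁻¹' Set.Iic (Qstar - ε) with hBdef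
        have hBmeas : MeasurableSet B := hQm measurableSet_Iic
        have hsplit : Aᶜ = B ∪ S ε := by
          ext x
          simp only [Set.mem_compl_iff, hA, Set.mem_setOf_eq, hBdef, hSdef, Set.mem_union,
            Set.mem_preimage, Set.mem_Iic, Set.mem_Ioo]
          constructor
          · intro hne
            have hlt : Q x < Qstar := lt_of_le_of_ne (hQ x).2 hne
            rcases le_or_gt (Q x) (Qstar - ε) with h | h
            · exact Or.inl h
            · exact Or.inr ⟨h, hlt⟩
          · rintro (h | h) <;> intro hcon
            · rw [hcon] at h; linarith
            · rw [hcon] at h; exact absurd h.2 (lt_irrefl _)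
        have hdisj : Disjoint B (S ε) := by
          rw [Set.disjoint_left]
          intro x hxB hxS
          simp only [hBdef, Set.mem_preimage, Set.mem_Iic] at hxB
          simp only [hSdef, Set.mem_preimage, Set.mem_Ioo] at hxS
          linarith [hxS.1]
        obtain ⟨hm, hnn, hint, hden, hpos, hle, heq⟩ := key t
        -- bound on B : Markov
        have hQsub_int : Integrable (fun x => (Qstar - Q x) * p t x) π := by
          have h1 : Integrable (fun x => Q x * p t x) π := by
            refine (hint.const_mul Qstar).mono' ((hQm.mul hm).aestronglyMeasurable)
              (Eventually.of_forall fun x => ?_)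
            have h1 : 0 ≤ Q x * p t x := mul_nonneg (hQ x).1.le (hnn x)
            rw [Real.norm_eq_abs, abs_of_nonneg h1]
            exact mul_le_mul_of_nonneg_right (hQ x).2 (hnn x)
          have h2 : Integrable (fun x => Qstar * p t x) π := hint.const_mul Qstar
          exact (h2.sub h1).congr (Eventually.of_forall fun x => by
            simp only [Pi.sub_apply]; ring)
        have hQsub : ∫ x, (Qstar - Q x) * p t x ∂π = Qstar - C t := by
          have h1 : Integrable (fun x => Q x * p t x) π := by
            refine (hint.const_mul Qstar).mono' ((hQm.mul hm).aestronglyMeasurable)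
              (Eventually.of_forall fun x => ?_)
            have h1 : 0 ≤ Q x * p t x := mul_nonneg (hQ x).1.le (hnn x)
            rw [Real.norm_eq_abs, abs_of_nonneg h1]
            exact mul_le_mul_of_nonneg_right (hQ x).2 (hnn x)
          have h2 : Integrable (fun x => Qstar * p t x) π := hint.const_mul Qstar
          rw [show (fun x => (Qstar - Q x) * p t x)
              = fun x => Qstar * p t x - Q x * p t x from funext fun x => by ring]
          rw [integral_sub h2 h1, integral_const_mul, hden, mul_one]
        have hBbound : ∫ x in B, p t x ∂π ≤ (Qstar - C t) / ε := by
          have step1 : ε * ∫ x in B, p t x ∂π ≤ ∫ x in B, (Qstar - Q x) * p t x ∂π := by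
            rw [← integral_const_mul]
            refine setIntegral_mono_on (hint.integrableOn.const_mul ε)
              (hQsub_int.integrableOn) hBmeas fun x hx => ?_
            simp only [hBdef, Set.mem_preimage, Set.mem_Iic] at hx
            exact mul_le_mul_of_nonneg_right (by linarith) (hnn x)
          have step2 : ∫ x in B, (Qstar - Q x) * p t x ∂π ≤ Qstar - C t := by
            rw [← hQsub]
            exact setIntegral_le_integral hQsub_int (Eventually.of_forall fun x =>
              mul_nonneg (by linarith [(hQ x).2]) (hnn x))
          rw [le_div_iff₀ hεpos, mul_comm]
          exact step1.trans step2
        -- bound on S ε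
        have hSbound : ∫ x in S ε, p t x ∂π ≤ (∫ x in S ε, p 0 x ∂π) / PA 0 := by
          have hptw : ∀ x, p t x ≤ p 0 x / PA 0 := by
            intro x
            rw [le_div_iff₀ hPA0]
            have h1 := hle x
            have h2 : PA t * p 0 x ≤ p 0 x := by
              nlinarith [hPAle1 t, hp0nn x]
            calc p t x * PA 0 = PA 0 * p t x := mul_comm _ _
              _ ≤ PA t * p 0 x := h1
              _ ≤ p 0 x := h2
          calc ∫ x in S ε, p t x ∂π ≤ ∫ x in S ε, p 0 x / PA 0 ∂π :=
                setIntegral_mono hint.integrableOn (hp0int.div_const _).integrableOn hptw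
            _ = (∫ x in S ε, p 0 x ∂π) / PA 0 := integral_div _ _
        -- combine
        have hsum : 1 - PA t = (∫ x in B, p t x ∂π) + ∫ x in S ε, p t x ∂π := by
          rw [← hcompl t, hsplit]
          exact setIntegral_union hdisj (hSmeas ε) hint.integrableOn hint.integrableOn
        have hfin : 1 - PA t < 1 - b := by
          rw [hsum]
          have b1 : (Qstar - C t) / ε < (1 - b) / 2 := by
            rw [div_lt_div_iff₀ hεpos (by norm_num : (0:ℝ) < 2)]
            nlinarith
          have b2 : (∫ x in S ε, p 0 x ∂π) / PA 0 < (1 - b) / 2 := by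
            rw [div_lt_div_iff₀ hPA0 (by norm_num : (0:ℝ) < 2)]
            nlinarith [hn]
          calc (∫ x in B, p t x ∂π) + ∫ x in S ε, p t x ∂π
              ≤ (Qstar - C t) / ε + (∫ x in S ε, p 0 x ∂π) / PA 0 :=
                add_le_add hBbound hSbound
            _ < (1 - b) / 2 + (1 - b) / 2 := add_lt_add b1 b2
            _ = 1 - b := by ring
        linarith
      · intro b hb
        exact Eventually.of_forall fun t => lt_of_le_of_lt (hPAle1 t) hb
    have hlog1 : Tendsto (fun t => Real.log (PA t)) atTop (nhds (Real.log 1)) :=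
      (Real.continuousAt_log one_ne_zero).tendsto.comp hPAto1
    rw [Real.log_one] at hlog1
    simpa using hlog1.neg
end

section
/- Under the self-consuming update p_{t+1} = p_t·H_t with H_t a measurable multiplier satisfying ∫ p_t H_t dπ = 1, H_t > 0, and H_t constant equal to its supremum h_t := sup_x H_t(x) on the set A = {Q = Q*} with P₀(A) > 0: for every t ≥ 1, p_t = (∏_{s<t} h_s)·p₀ on A, P_t(A) = P₀(A)·∏_{s<t} h_s, ∏_{s<t} h_s ≤ 1/P₀(A), h_t ≥ 1 implies h_t → 1 as t → ∞, and p_t(x) ≤ p₀(x)/P₀(A) for all x. -/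
open MeasureTheory Filter

/-- Mass dynamics on the maximizer set for the self-consuming update
`p_{t+1} = p_t·H_t`, where `H_t > 0` is a normalized multiplier (`∫ p_t H_t dπ = 1`)
bounded by `h_t` and attaining `h_t` on `A`, with `P₀(A) > 0` and `h_t ≥ 1`:
the density ratio, mass-product identity, product bound, `h_t → 1`, and uniform
domination `p_t ≤ p₀/P₀(A)` all hold. -/
theorem selfconsuming_mass_dynamics
    {X : Type*} [MeasurableSpace X] (π : Measure X) [SigmaFinite π]
    (p : ℕ → X → ℝ) (H : ℕ → X → ℝ) (h : ℕ → ℝ) (A : Set X)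
    (hAmeas : MeasurableSet A)
    (hp0m : Measurable (p 0)) (hp0nn : ∀ x, 0 ≤ p 0 x)
    (hp0int : Integrable (p 0) π) (hp0den : ∫ x, p 0 x ∂π = 1)
    (hHm : ∀ t, Measurable (H t))
    (hHpos : ∀ t x, 0 < H t x)
    (hHle : ∀ t x, H t x ≤ h t)
    (hHA : ∀ t, ∀ x ∈ A, H t x = h t)
    (hHint : ∀ t, Integrable (fun x => p t x * H t x) π)
    (hHnorm : ∀ t, ∫ x, p t x * H t x ∂π = 1)
    (hrec : ∀ t x, p (t + 1) x = p t x * H t x)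
    (hone : ∀ t, 1 ≤ h t)
    (hPA0 : 0 < ∫ x in A, p 0 x ∂π) :
    (∀ t, ∀ x ∈ A, p t x = (∏ s ∈ Finset.range t, h s) * p 0 x)
    ∧ (∀ t, ∫ x in A, p t x ∂π
        = (∫ x in A, p 0 x ∂π) * ∏ s ∈ Finset.range t, h s)
    ∧ (∀ t, (∏ s ∈ Finset.range t, h s) ≤ 1 / ∫ x in A, p 0 x ∂π)
    ∧ Tendsto h atTop (nhds 1)
    ∧ (∀ t x, p t x ≤ p 0 x / ∫ y in A, p 0 y ∂π) := by
  set C := ∫ x in A, p 0 x ∂π with hC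
  set P : ℕ → ℝ := fun t => ∏ s ∈ Finset.range t, h s with hPdef
  -- nonnegativity of all densities
  have hpnn : ∀ t x, 0 ≤ p t x := by
    intro t
    induction t with
    | zero => exact hp0nn
    | succ t ih =>
      intro x
      rw [hrec]
      exact mul_nonneg (ih x) (hHpos t x).le
  -- integrability
  have hpint : ∀ t, Integrable (p t) π := by
    intro t
    cases t with
    | zero => exact hp0int
    | succ t => exact (hHint t).congr (Filter.Eventually.of_forall fun x => (hrec t x).symm)
  -- total mass 1
  have hpden : ∀ t, ∫ x, p t x ∂π = 1 := by
    intro t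
    cases t with
    | zero => exact hp0den
    | succ t => simp only [hrec]; exact hHnorm t
  -- pointwise product formula
  have hprodH : ∀ t x, p t x = p 0 x * ∏ s ∈ Finset.range t, H s x := by
    intro t
    induction t with
    | zero => simp
    | succ t ih =>
      intro x
      rw [hrec, ih, Finset.prod_range_succ, mul_assoc]
  -- claim 1
  have c1 : ∀ t, ∀ x ∈ A, p t x = P t * p 0 x := by
    intro t x hx
    rw [hprodH t x, mul_comm]
    congr 1
    exact Finset.prod_congr rfl fun s _ => hHA s x hx
  -- claim 2
  have c2 : ∀ t, ∫ x in A, p t x ∂π = C * P t := by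
    intro t
    rw [setIntegral_congr_fun hAmeas (fun x hx => c1 t x hx)]
    rw [integral_const_mul, mul_comm]
  -- P t ≥ 1
  have hP1 : ∀ t, 1 ≤ P t := by
    intro t
    induction t with
    | zero => simp [hPdef]
    | succ t ih =>
      have : P (t + 1) = P t * h t := Finset.prod_range_succ h t
      rw [this]
      nlinarith [hone t]
  -- claim 3
  have c3 : ∀ t, P t ≤ 1 / C := by
    intro t
    have hle : ∫ x in A, p t x ∂π ≤ ∫ x, p t x ∂π :=
      setIntegral_le_integral (hpint t) (Filter.Eventually.of_forall (hpnn t))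
    rw [c2 t, hpden t] at hle
    rw [le_div_iff₀ hPA0]
    linarith [hle]
  -- claim 4
  have hmono : Monotone P := by
    apply monotone_nat_of_le_succ
    intro t
    have : P (t + 1) = P t * h t := Finset.prod_range_succ h t
    rw [this]
    exact le_mul_of_one_le_right (by linarith [hP1 t]) (hone t)
  have hbdd : BddAbove (Set.range P) := ⟨1 / C, by rintro _ ⟨t, rfl⟩; exact c3 t⟩
  have hT : Tendsto P atTop (nhds (⨆ t, P t)) := tendsto_atTop_ciSup hmono hbdd
  have hL1 : 1 ≤ ⨆ t, P t := by
    have := le_ciSup hbdd 0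
    simpa [hPdef] using this
  have hLne : (⨆ t, P t) ≠ 0 := by linarith
  have hT' : Tendsto (fun t => P (t + 1) / P t) atTop (nhds ((⨆ t, P t) / ⨆ t, P t)) :=
    (hT.comp (tendsto_add_atTop_nat 1)).div hT hLne
  have c4 : Tendsto h atTop (nhds 1) := by
    rw [div_self hLne] at hT'
    refine hT'.congr fun t => ?_
    have hPt : P t ≠ 0 := by linarith [hP1 t]
    have hs : P (t + 1) = P t * h t := Finset.prod_range_succ h t
    rw [hs, mul_comm, mul_div_assoc, div_self hPt, mul_one]
  -- claim 5
  have c5 : ∀ t x, p t x ≤ p 0 x / C := by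
    intro t x
    have h1 : ∏ s ∈ Finset.range t, H s x ≤ P t :=
      Finset.prod_le_prod (fun s _ => (hHpos s x).le) (fun s _ => hHle s x)
    have h2 : ∏ s ∈ Finset.range t, H s x ≤ 1 / C := le_trans h1 (c3 t)
    calc p t x = p 0 x * ∏ s ∈ Finset.range t, H s x := hprodH t x
      _ ≤ p 0 x * (1 / C) := mul_le_mul_of_nonneg_left h2 (hp0nn x)
      _ = p 0 x / C := by ring
  exact ⟨c1, c2, c3, c4, c5⟩
end

section
/- Let K ≥ 2 be finite, p a probability density, and Δr ∈ L^∞ with ‖Δr‖_∞ < ∞. Then for every x, |H_{p,Δr}^K(x) - H_{p,0}^K(x)| ≤ (K/2)·‖Δr‖_∞, where H_{p,Δr}^K(x) = E[K·e^{r(x)+Δr(x)+ε(x)}/(e^{r(x)+Δr(x)+ε(x)} + ∑_{k=1}^{K-1} e^{r(X_k)+Δr(X_k)+ε_k(X_k)})]. -/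
open MeasureTheory ProbabilityTheory


lemma pade_exp (c : ℝ) (hc : 0 ≤ c) : (2 - c) * Real.exp c ≤ 2 + c := by
  set φ : ℝ → ℝ := fun t => (2 + t) - (2 - t) * Real.exp t with hφ
  have hd : ∀ t : ℝ, HasDerivAt φ (1 - (1 - t) * Real.exp t) t := by
    intro t
    have h1 : HasDerivAt (fun t : ℝ => (2 - t) * Real.exp t)
        ((-1) * Real.exp t + (2 - t) * Real.exp t) t :=
      (((hasDerivAt_id t).const_sub 2).mul (Real.hasDerivAt_exp t))
    have h2 : HasDerivAt (fun t : ℝ => (2 + t)) 1 t :=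
      (hasDerivAt_id t).const_add 2
    have : HasDerivAt φ (1 - (-1 * Real.exp t + (2 - t) * Real.exp t)) t := h2.sub h1
    convert this using 1
    ring
  have hmono : Monotone φ := by
    apply monotone_of_deriv_nonneg
    · exact fun t => (hd t).differentiableAt
    · intro t
      rw [(hd t).deriv]
      have h : (1 - t) * Real.exp t ≤ Real.exp (-t) * Real.exp t :=
        mul_le_mul_of_nonneg_right (by linarith [Real.add_one_le_exp (-t)])
          (Real.exp_pos t).le
      rw [← Real.exp_add] at h
      simp at h
      linarith
  have h0 : φ 0 = 0 := by simp [hφ]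
  have := hmono hc
  rw [h0] at this
  simp only [hφ] at this
  linarith

lemma key_exp (c : ℝ) (hc : 0 ≤ c) : 2 * (Real.exp c - 1) ≤ c * (Real.exp c + 1) := by
  nlinarith [pade_exp c hc]

lemma one_sided {A B a b c : ℝ} (hA : 0 < A) (hB : 0 < B) (ha : 0 < a) (hb : 0 < b)
    (hc : 0 ≤ c) (h1 : A ≤ Real.exp c * a) (h2 : Real.exp (-c) * b ≤ B) :
    A / (A + B) - a / (a + b) ≤ c / 2 := by
  set E := Real.exp c with hE
  have hEpos : 0 < E := Real.exp_pos c
  have hE1 : 1 ≤ E := Real.one_le_exp hc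
  have hEinv : Real.exp (-c) = E⁻¹ := by rw [hE, Real.exp_neg]
  rw [hEinv] at h2
  have step1 : A / (A + B) ≤ E^2 * a / (E^2 * a + b) := by
    rw [div_le_div_iff₀ (by positivity) (by positivity)]
    have hAb : A * b ≤ E * a * b := by nlinarith
    have h2' : E⁻¹ * b ≤ B := h2
    have : E * a * b ≤ E^2 * a * B := by
      have := mul_le_mul_of_nonneg_left h2' (by positivity : (0:ℝ) ≤ E^2 * a)
      calc E * a * b = E^2 * a * (E⁻¹ * b) := by field_simp
        _ ≤ E^2 * a * B := this
    nlinarith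
  have step2 : E^2 * a / (E^2 * a + b) - a / (a + b) ≤ c / 2 := by
    have e1 : E^2 * a / (E^2 * a + b) - a / (a + b)
        = a * b * (E^2 - 1) / ((E^2 * a + b) * (a + b)) := by
      field_simp
      ring
    rw [e1, div_le_iff₀ (by positivity)]
    have hkey := key_exp c hc
    rw [← hE] at hkey
    nlinarith [mul_nonneg hc (sq_nonneg (E * a - b)),
      mul_le_mul_of_nonneg_left hkey (le_of_lt (mul_pos (mul_pos ha hb) (by positivity : (0:ℝ) < E + 1)))]
  linarith

lemma frac_abs {A B a b c : ℝ} (hA : 0 < A) (hB : 0 < B) (ha : 0 < a) (hb : 0 < b)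
    (hc : 0 ≤ c)
    (h1 : A ≤ Real.exp c * a) (h1' : a ≤ Real.exp c * A)
    (h2 : Real.exp (-c) * b ≤ B) (h2' : Real.exp (-c) * B ≤ b) :
    |A / (A + B) - a / (a + b)| ≤ c / 2 := by
  rw [abs_sub_le_iff]
  exact ⟨one_sided hA hB ha hb hc h1 h2, one_sided ha hb hA hB hc h1' h2'⟩

/-- Lipschitz sensitivity of the Plackett–Luce choice kernel to bounded reward
perturbations: with `K - 1` i.i.d. competitors `X_k ∼ p` and independent noise
fields `ε, ε_k`, if `|Δr(x)| ≤ c` for all `x`, then for every `x`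
`|H_{p,Δr}^K(x) - H_{p,0}^K(x)| ≤ (K/2)·c`. -/
theorem choice_kernel_reward_lipschitz
    {Ω : Type*} [MeasurableSpace Ω] (μ : Measure Ω) [IsProbabilityMeasure μ]
    {𝒳 : Type*} [MeasurableSpace 𝒳] (π : Measure 𝒳) [SigmaFinite π]
    (p : 𝒳 → ℝ) (hpm : Measurable p) (hpnn : ∀ x, 0 ≤ p x)
    (hpden : ∫⁻ x, ENNReal.ofReal (p x) ∂π = 1)
    (K : ℕ) (hK : 2 ≤ K)
    (r Δr : 𝒳 → ℝ) (hr : Measurable r) (hΔr : Measurable Δr)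
    (c : ℝ) (hc : ∀ x, |Δr x| ≤ c)
    (Xs : Fin K → Ω → 𝒳) (hXs : ∀ k, Measurable (Xs k))
    (εs : Fin K → Ω → 𝒳 → ℝ)
    (hεs : ∀ k, Measurable (fun q : Ω × 𝒳 => εs k q.1 q.2))
    (hindep : iIndepFun (fun k ω => (Xs k ω, εs k ω)) μ)
    (hlaw : ∀ k : Fin K, k ≠ ⟨0, by omega⟩ →
      Measure.map (Xs k) μ = π.withDensity fun x => ENNReal.ofReal (p x))
    -- the perturbed choice kernel, for an arbitrary reward function `s`
    (H : (𝒳 → ℝ) → 𝒳 → ℝ)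
    (hH : ∀ (s : 𝒳 → ℝ) (x : 𝒳), H s x = (K : ℝ) * ∫ ω,
        Real.exp (s x + εs ⟨0, by omega⟩ ω x)
          / (Real.exp (s x + εs ⟨0, by omega⟩ ω x)
            + ∑ k ∈ Finset.univ.erase ⟨0, by omega⟩,
                Real.exp (s (Xs k ω) + εs k ω (Xs k ω))) ∂μ) :
    ∀ x, |H (fun y => r y + Δr y) x - H r x| ≤ ((K : ℝ) / 2) * c := by
  intro x
  have hc0 : 0 ≤ c := le_trans (abs_nonneg _) (hc x)
  set z : Fin K := ⟨0, by omega⟩ with hz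
  set F : Finset (Fin K) := Finset.univ.erase z with hF
  have hFne : F.Nonempty := ⟨⟨1, by omega⟩, by
    simp [hF, Finset.mem_erase, Fin.ext_iff]⟩
  -- the two integrands
  set S : (𝒳 → ℝ) → Ω → ℝ := fun s ω =>
    Real.exp (s x + εs z ω x)
      / (Real.exp (s x + εs z ω x)
        + ∑ k ∈ F, Real.exp (s (Xs k ω) + εs k ω (Xs k ω))) with hS
  -- measurability of integrands
  have hmeasS : ∀ s : 𝒳 → ℝ, Measurable s → Measurable (S s) := by
    intro s hs
    have h1 : Measurable fun ω => Real.exp (s x + εs z ω x) := by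
      have : Measurable fun ω => εs z ω x :=
        (hεs z).comp (measurable_id.prodMk measurable_const)
      exact (Real.measurable_exp.comp (measurable_const.add this))
    have h2 : Measurable fun ω => ∑ k ∈ F, Real.exp (s (Xs k ω) + εs k ω (Xs k ω)) := by
      apply Finset.measurable_sum
      intro k _
      have ha : Measurable fun ω => s (Xs k ω) := hs.comp (hXs k)
      have hb : Measurable fun ω => εs k ω (Xs k ω) :=
        (hεs k).comp (measurable_id.prodMk (hXs k))
      exact Real.measurable_exp.comp (ha.add hb)
    exact h1.div (h1.add h2)
  -- denominators are positive, integrands bounded in [0,1]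
  have hden : ∀ (s : 𝒳 → ℝ) (ω : Ω),
      0 < Real.exp (s x + εs z ω x)
        + ∑ k ∈ F, Real.exp (s (Xs k ω) + εs k ω (Xs k ω)) := by
    intro s ω
    have h2 : (0:ℝ) < ∑ k ∈ F, Real.exp (s (Xs k ω) + εs k ω (Xs k ω)) :=
      Finset.sum_pos (fun k _ => Real.exp_pos _) hFne
    exact add_pos (Real.exp_pos _) h2
  have hbound : ∀ (s : 𝒳 → ℝ) (ω : Ω), ‖S s ω‖ ≤ 1 := by
    intro s ω
    rw [Real.norm_eq_abs, abs_of_nonneg (div_nonneg (Real.exp_pos _).le (hden s ω).le)]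
    rw [div_le_one (hden s ω)]
    have : (0:ℝ) ≤ ∑ k ∈ F, Real.exp (s (Xs k ω) + εs k ω (Xs k ω)) :=
      Finset.sum_nonneg (fun k _ => (Real.exp_pos _).le)
    linarith
  have hint : ∀ s : 𝒳 → ℝ, Measurable s → Integrable (S s) μ := by
    intro s hs
    refine ⟨((hmeasS s hs).aestronglyMeasurable), ?_⟩
    exact HasFiniteIntegral.of_bounded (C := 1) (Filter.Eventually.of_forall (hbound s))
  have hintr := hint r hr
  have hintr' := hint (fun y => r y + Δr y) (hr.add hΔr)
  -- pointwise bound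
  have hpt : ∀ ω, |S (fun y => r y + Δr y) ω - S r ω| ≤ c / 2 := by
    intro ω
    simp only [hS]
    apply frac_abs (Real.exp_pos _)
      (Finset.sum_pos (fun k _ => Real.exp_pos _) hFne)
      (Real.exp_pos _)
      (Finset.sum_pos (fun k _ => Real.exp_pos _) hFne) hc0
    · rw [← Real.exp_add]
      exact Real.exp_le_exp.mpr (by linarith [abs_le.mp (hc x)])
    · rw [← Real.exp_add]
      exact Real.exp_le_exp.mpr (by linarith [abs_le.mp (hc x)])
    · rw [Finset.mul_sum]
      apply Finset.sum_le_sum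
      intro k _
      rw [← Real.exp_add]
      exact Real.exp_le_exp.mpr (by linarith [abs_le.mp (hc (Xs k ω))])
    · rw [Finset.mul_sum]
      apply Finset.sum_le_sum
      intro k _
      rw [← Real.exp_add]
      exact Real.exp_le_exp.mpr (by linarith [abs_le.mp (hc (Xs k ω))])
  -- put everything together
  have hrw : H (fun y => r y + Δr y) x - H r x
      = (K : ℝ) * ∫ ω, (S (fun y => r y + Δr y) ω - S r ω) ∂μ := by
    rw [hH, hH, integral_sub hintr' hintr, mul_sub]
  rw [hrw, abs_mul, abs_of_nonneg (Nat.cast_nonneg K : (0:ℝ) ≤ (K:ℝ))]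
  have hIb : |∫ ω, (S (fun y => r y + Δr y) ω - S r ω) ∂μ| ≤ c / 2 := by
    rw [← Real.norm_eq_abs]
    calc ‖∫ ω, (S (fun y => r y + Δr y) ω - S r ω) ∂μ‖
        ≤ (c / 2) * (μ Set.univ).toReal :=
          norm_integral_le_of_norm_le_const (Filter.Eventually.of_forall fun ω => by
            rw [Real.norm_eq_abs]; exact hpt ω)
      _ = c / 2 := by simp
  calc (K : ℝ) * |∫ ω, (S (fun y => r y + Δr y) ω - S r ω) ∂μ|
      ≤ (K : ℝ) * (c / 2) :=
        mul_le_mul_of_nonneg_left hIb (Nat.cast_nonneg K)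
    _ = ((K : ℝ) / 2) * c := by ring
end

section
/- Let Q : X → ℝ be measurable with 0 < (1-α)Q* < Q* := ess sup Q < ∞ under a reference probability measure P_ref, α ∈ (0,1), and assume α > (∫ Q*/(Q* - Q(x)) dP_ref(x))^{-1}. Then there exists a unique c* ∈ ((1-α)Q*, Q*] such that w*(x) = α/(1 - (1-α)Q(x)/c*) is a probability density w.r.t. P_ref, and w* is the unique fixed point of the normalized operator L_N[w] = α + (1-α)·Q·w/⟨w,Q⟩ on densities; moreover ⟨w*, Q⟩ = c*. -/
open MeasureTheory

section Aux
variable {X : Type*} [MeasurableSpace X] {μ : Measure X} [IsProbabilityMeasure μ]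

lemma aux_denom_pos {α Qstar c q : ℝ} (hα1 : α < 1) (hq : 0 < q) (hqle : q ≤ Qstar)
    (hc : (1-α)*Qstar < c) : 0 < 1 - (1-α)*q/c := by
  have hb : (0:ℝ) ≤ (1-α)*Qstar := by nlinarith
  have hc0 : 0 < c := lt_of_le_of_lt hb hc
  have : (1-α)*q ≤ (1-α)*Qstar := by nlinarith
  rw [sub_pos, div_lt_one hc0]; linarith

lemma aux_g_eq {α c q : ℝ} (hc : c ≠ 0) (hd : 1 - (1-α)*q/c ≠ 0) :
    α / (1 - (1-α)*q/c) = α*c/(c - (1-α)*q) := by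
  have hd2 : c - (1-α)*q ≠ 0 := by
    intro h; apply hd; field_simp; linarith [h]
  field_simp

lemma aux_g_strictanti {α c1 c2 q : ℝ} (hα0 : 0 < α) (hα1 : α < 1) (hq : 0 < q)
    (hd1 : 0 < 1 - (1-α)*q/c1) (hc1 : 0 < c1) (h12 : c1 < c2) :
    α / (1 - (1-α)*q/c2) < α / (1 - (1-α)*q/c1) := by
  have hk : 0 < (1-α)*q := by nlinarith
  have h2 : (1-α)*q/c2 < (1-α)*q/c1 := div_lt_div_of_pos_left hk hc1 h12
  exact div_lt_div_of_pos_left hα0 hd1 (by linarith)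

-- measurability of g c
lemma aux_g_meas {Q : X → ℝ} (hQm : Measurable Q) (α c : ℝ) :
    Measurable (fun x => α / (1 - (1-α)*Q x/c)) := by
  fun_prop

-- bounds for g c : α ≤ g c x ≤ α*c/(c-b)
lemma aux_g_le {α Qstar c q : ℝ} (hα0 : 0 < α) (hα1 : α < 1) (hq : 0 < q) (hqle : q ≤ Qstar)
    (hc : (1-α)*Qstar < c) :
    α / (1 - (1-α)*q/c) ≤ α*c/(c - (1-α)*Qstar) := by
  have hd := aux_denom_pos hα1 hq hqle hc
  have hb : (0:ℝ) ≤ (1-α)*Qstar := by nlinarith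
  have hc0 : 0 < c := lt_of_le_of_lt hb hc
  rw [aux_g_eq hc0.ne' hd.ne']
  apply div_le_div_of_nonneg_left (by positivity) (by linarith) (by nlinarith)

lemma aux_g_nonneg {α Qstar c q : ℝ} (hα0 : 0 < α) (hα1 : α < 1) (hq : 0 < q) (hqle : q ≤ Qstar)
    (hc : (1-α)*Qstar < c) : 0 ≤ α / (1 - (1-α)*q/c) :=
  le_of_lt (div_pos hα0 (aux_denom_pos hα1 hq hqle hc))

-- integrability of g c
lemma aux_g_int {Q : X → ℝ} (hQm : Measurable Q) {α Qstar c : ℝ}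
    (hα0 : 0 < α) (hα1 : α < 1) (hQpos : ∀ x, 0 < Q x) (hQle : ∀ x, Q x ≤ Qstar)
    (hc : (1-α)*Qstar < c) :
    Integrable (fun x => α / (1 - (1-α)*Q x/c)) μ := by
  apply Integrable.mono' (integrable_const (α*c/(c - (1-α)*Qstar)))
    (aux_g_meas hQm α c).aestronglyMeasurable
  filter_upwards with x
  rw [Real.norm_eq_abs, abs_of_nonneg (aux_g_nonneg hα0 hα1 (hQpos x) (hQle x) hc)]
  exact aux_g_le hα0 hα1 (hQpos x) (hQle x) hc


lemma aux_g_anti {α c1 c2 q : ℝ} (hα0 : 0 < α) (hα1 : α < 1) (hq : 0 < q)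
    (hd1 : 0 < 1 - (1-α)*q/c1) (hc1 : 0 < c1) (h12 : c1 ≤ c2) :
    α / (1 - (1-α)*q/c2) ≤ α / (1 - (1-α)*q/c1) := by
  rcases eq_or_lt_of_le h12 with h|h
  · rw [h]
  · exact le_of_lt (aux_g_strictanti hα0 hα1 hq hd1 hc1 h)

lemma aux_exists_gt {Q : X → ℝ} (hQm : Measurable Q) {α Qstar : ℝ}
    (hQstar : 0 < Qstar) (hα0 : 0 < α) (hα1 : α < 1)
    (hQpos : ∀ x, 0 < Q x) (hQle : ∀ x, Q x ≤ Qstar)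
    (hA3 : (∫⁻ x, ENNReal.ofReal (Qstar / (Qstar - Q x)) ∂μ)⁻¹ < ENNReal.ofReal α) :
    ∃ c₁ ∈ Set.Ioc ((1-α)*Qstar) Qstar, 1 < ∫ x, α / (1 - (1-α)*Q x/c₁) ∂μ := by
  by_contra hcon
  push_neg at hcon
  set b := (1-α)*Qstar with hbdef
  have hb0 : 0 < b := by nlinarith
  have hQb : Qstar - b > 0 := by simp [hbdef]; nlinarith
  set cseq : ℕ → ℝ := fun n => b + (Qstar - b)/(n+1) with hcseq
  have hmem : ∀ n, cseq n ∈ Set.Ioc b Qstar := by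
    intro n
    constructor
    · simp only [hcseq, lt_add_iff_pos_right]
      positivity
    · simp only [hcseq]
      have h1 : ((n:ℝ)+1) ≥ 1 := by exact_mod_cast Nat.one_le_iff_ne_zero.mpr (by positivity)
      have : (Qstar - b)/(n+1) ≤ (Qstar - b) := by
        apply div_le_self (le_of_lt hQb) h1
      linarith
  have hanti : ∀ n m : ℕ, n ≤ m → cseq m ≤ cseq n := by
    intro n m hnm
    simp only [hcseq, add_le_add_iff_left]
    apply div_le_div_of_nonneg_left (le_of_lt hQb) (by positivity)
    have : (n:ℝ) ≤ m := Nat.cast_le.mpr hnm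
    linarith
  have htend : Filter.Tendsto cseq Filter.atTop (nhds b) := by
    have h0 : Filter.Tendsto (fun n : ℕ => (Qstar - b)/((n:ℝ)+1)) Filter.atTop (nhds 0) := by
      have := (tendsto_const_div_atTop_nhds_zero_nat (Qstar - b)).comp
        (Filter.tendsto_add_atTop_nat 1)
      convert this using 2 with n
      simp [Function.comp]
    simpa using (tendsto_const_nhds (x := b)).add h0
  set G : ℕ → X → ENNReal := fun n x => ENNReal.ofReal (α / (1 - (1-α)*Q x/(cseq n))) with hG
  have hGmeas : ∀ n, Measurable (G n) := by
    intro n; exact (aux_g_meas hQm α (cseq n)).ennreal_ofReal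
  have hGmono : ∀ x, Monotone fun n => G n x := by
    intro x n m hnm
    apply ENNReal.ofReal_le_ofReal
    exact aux_g_anti hα0 hα1 (hQpos x)
      (aux_denom_pos hα1 (hQpos x) (hQle x) (hmem m).1) (lt_trans hb0 (hmem m).1)
      (hanti n m hnm)
  have hGle : ∀ n, ∫⁻ x, G n x ∂μ ≤ 1 := by
    intro n
    have hint := aux_g_int (μ := μ) hQm hα0 hα1 hQpos hQle (hmem n).1
    rw [hG]
    rw [← MeasureTheory.ofReal_integral_eq_lintegral_ofReal hint
      (Filter.Eventually.of_forall fun x =>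
        aux_g_nonneg hα0 hα1 (hQpos x) (hQle x) (hmem n).1)]
    calc ENNReal.ofReal (∫ x, α / (1 - (1-α)*Q x/(cseq n)) ∂μ)
        ≤ ENNReal.ofReal 1 := ENNReal.ofReal_le_ofReal (hcon _ (hmem n))
      _ = 1 := ENNReal.ofReal_one
  -- pointwise bound
  have hpt : ∀ x, ENNReal.ofReal (α * (Qstar/(Qstar - Q x))) ≤ ⨆ n, G n x := by
    intro x
    rcases eq_or_lt_of_le (hQle x) with h|h
    · rw [← h]; simp
    · -- tendsto
      have hbne : b ≠ 0 := hb0.ne'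
      have hdb : 1 - (1-α)*Q x/b ≠ 0 := by
        have : (1-α)*Q x/b = Q x/Qstar := by
          rw [hbdef, mul_div_mul_left _ _ (show (1-α) ≠ 0 by linarith)]
        rw [this]
        have : Q x/Qstar < 1 := (div_lt_one hQstar).mpr h
        linarith
      have hcont : ContinuousAt (fun c => α / (1 - (1-α)*Q x/c)) b :=
        ContinuousAt.div continuousAt_const
          (continuousAt_const.sub (continuousAt_const.div continuousAt_id hbne)) hdb
      have hval : α / (1 - (1-α)*Q x/b) = α * (Qstar/(Qstar - Q x)) := by
        rw [hbdef]
        have h1 : Qstar - Q x ≠ 0 := by linarith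
        have h2 : (1-α) ≠ 0 := by linarith
        have hd : 1 - (1-α)*Q x/((1-α)*Qstar) = (Qstar - Q x)/Qstar := by
          field_simp
        rw [hd, div_div_eq_mul_div, mul_div_assoc]
      have htd : Filter.Tendsto (fun n => G n x) Filter.atTop
          (nhds (ENNReal.ofReal (α * (Qstar/(Qstar - Q x))))) := by
        rw [← hval]
        exact (ENNReal.continuous_ofReal.continuousAt.tendsto.comp
          (hcont.tendsto.comp htend))
      exact le_of_tendsto htd (Filter.Eventually.of_forall fun n => le_iSup (fun n => G n x) n)
  -- combine
  have hL : ∫⁻ x, ENNReal.ofReal (α * (Qstar/(Qstar - Q x))) ∂μ ≤ 1 := by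
    calc ∫⁻ x, ENNReal.ofReal (α * (Qstar/(Qstar - Q x))) ∂μ
        ≤ ∫⁻ x, ⨆ n, G n x ∂μ := lintegral_mono hpt
      _ = ⨆ n, ∫⁻ x, G n x ∂μ := lintegral_iSup hGmeas (fun n m hnm => fun x => hGmono x hnm)
      _ ≤ 1 := iSup_le hGle
  have hsplit : ∀ x, ENNReal.ofReal (α * (Qstar/(Qstar - Q x)))
      = ENNReal.ofReal α * ENNReal.ofReal (Qstar/(Qstar - Q x)) := by
    intro x; exact ENNReal.ofReal_mul (le_of_lt hα0)
  rw [funext hsplit] at hL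
  rw [lintegral_const_mul _ (by fun_prop : Measurable fun x => ENNReal.ofReal (Qstar/(Qstar - Q x)))] at hL
  have hL2 : (∫⁻ x, ENNReal.ofReal (Qstar/(Qstar - Q x)) ∂μ) ≤ (ENNReal.ofReal α)⁻¹ :=
    ENNReal.le_inv_iff_mul_le.mpr (by rwa [mul_comm])
  exact absurd hL2 (not_le.mpr (ENNReal.inv_lt_iff_inv_lt.mp hA3))

lemma aux_f_strictanti {Q : X → ℝ} (hQm : Measurable Q) {α Qstar c1 c2 : ℝ}
    (hQstar : 0 < Qstar) (hα0 : 0 < α) (hα1 : α < 1)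
    (hQpos : ∀ x, 0 < Q x) (hQle : ∀ x, Q x ≤ Qstar)
    (hc1 : (1-α)*Qstar < c1) (h12 : c1 < c2) :
    ∫ x, α / (1 - (1-α)*Q x/c2) ∂μ < ∫ x, α / (1 - (1-α)*Q x/c1) ∂μ := by
  have hc2 : (1-α)*Qstar < c2 := lt_trans hc1 h12
  have hi1 := aux_g_int (μ := μ) hQm hα0 hα1 hQpos hQle hc1
  have hi2 := aux_g_int (μ := μ) hQm hα0 hα1 hQpos hQle hc2
  have hb0 : 0 < (1-α)*Qstar := by nlinarith
  have hstr : ∀ x, α/(1-(1-α)*Q x/c2) < α/(1-(1-α)*Q x/c1) := fun x =>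
    aux_g_strictanti hα0 hα1 (hQpos x)
      (aux_denom_pos hα1 (hQpos x) (hQle x) hc1) (lt_trans hb0 hc1) h12
  have hdiff : 0 < ∫ x, (α/(1-(1-α)*Q x/c1) - α/(1-(1-α)*Q x/c2)) ∂μ := by
    rw [integral_pos_iff_support_of_nonneg_ae
      (Filter.Eventually.of_forall fun x => sub_nonneg.mpr (le_of_lt (hstr x)))
      (hi1.sub hi2)]
    have hsupp : (Function.support fun x => α/(1-(1-α)*Q x/c1) - α/(1-(1-α)*Q x/c2))
        = Set.univ := by
      ext x
      simp only [Function.mem_support, Set.mem_univ, iff_true]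
      exact sub_ne_zero.mpr (ne_of_gt (hstr x))
    rw [hsupp]
    simp
  rw [integral_sub hi1 hi2] at hdiff
  linarith

lemma aux_f_contAt {Q : X → ℝ} (hQm : Measurable Q) {α Qstar c0 : ℝ}
    (hQstar : 0 < Qstar) (hα0 : 0 < α) (hα1 : α < 1)
    (hQpos : ∀ x, 0 < Q x) (hQle : ∀ x, Q x ≤ Qstar)
    (hc0 : (1-α)*Qstar < c0) :
    ContinuousAt (fun c => ∫ x, α / (1 - (1-α)*Q x/c) ∂μ) c0 := by
  set b := (1-α)*Qstar with hbdef
  have hb0 : 0 < b := by nlinarith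
  set m := (b + c0)/2 with hm
  have hmb : b < m := by simp only [hm]; linarith
  have hmc : m < c0 := by simp only [hm]; linarith
  apply MeasureTheory.continuousAt_of_dominated (bound := fun _ => α*m/(m-b))
  · filter_upwards with c
    exact (Measurable.aestronglyMeasurable (by fun_prop))
  · have hnb : Set.Ioi m ∈ nhds c0 := Ioi_mem_nhds hmc
    filter_upwards [hnb] with c hc
    filter_upwards with x
    have hq := hQpos x
    have hd := aux_denom_pos hα1 hq (hQle x) (lt_trans hmb hc)
    rw [Real.norm_eq_abs, abs_of_nonneg (le_of_lt (div_pos hα0 hd))]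
    have h1 : α / (1 - (1-α)*Q x/c) ≤ α / (1 - (1-α)*Q x/m) :=
      aux_g_anti hα0 hα1 hq (aux_denom_pos hα1 hq (hQle x) hmb)
        (lt_trans hb0 hmb) (le_of_lt hc)
    exact le_trans h1 (aux_g_le hα0 hα1 hq (hQle x) hmb)
  · exact integrable_const _
  · filter_upwards with x
    have hq := hQpos x
    have hd := aux_denom_pos hα1 hq (hQle x) hc0
    have hcne : c0 ≠ 0 := by
      have : (0:ℝ) ≤ b := le_of_lt hb0
      intro h; rw [h] at hc0; linarith
    exact ContinuousAt.div continuousAt_const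
      (continuousAt_const.sub (continuousAt_const.div continuousAt_id hcne)) hd.ne'

lemma aux_f_qstar_le {Q : X → ℝ} (hQm : Measurable Q) {α Qstar : ℝ}
    (hQstar : 0 < Qstar) (hα0 : 0 < α) (hα1 : α < 1)
    (hQpos : ∀ x, 0 < Q x) (hQle : ∀ x, Q x ≤ Qstar) :
    ∫ x, α / (1 - (1-α)*Q x/Qstar) ∂μ ≤ 1 := by
  have hbQ : (1-α)*Qstar < Qstar := by nlinarith
  have hi := aux_g_int (μ := μ) hQm hα0 hα1 hQpos hQle hbQ
  have hpt : ∀ x, α / (1 - (1-α)*Q x/Qstar) ≤ 1 := by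
    intro x
    have hd : α ≤ 1 - (1-α)*Q x/Qstar := by
      have h1 : (1-α)*Q x/Qstar ≤ 1-α := by
        rw [div_le_iff₀ hQstar]
        nlinarith [hQle x, hQpos x]
      linarith
    calc α / (1 - (1-α)*Q x/Qstar) ≤ α/α :=
          div_le_div_of_nonneg_left (le_of_lt hα0) hα0 hd
      _ = 1 := div_self hα0.ne'
  calc ∫ x, α / (1 - (1-α)*Q x/Qstar) ∂μ ≤ ∫ _x, (1:ℝ) ∂μ :=
        integral_mono hi (integrable_const 1) hpt
    _ = 1 := by simp

end Aux




lemma aux_alg1 {α D q cc : ℝ} (hD : D ≠ 0) (hcc : cc ≠ 0) (h : (1-α)*q/cc = 1 - D) :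
    α + (1-α) * q * (α / D) / cc = α / D := by
  have h1 : (1-α) * q * (α / D) / cc = α*(1-D)/D := by
    rw [← h]; ring
  rw [h1]
  field_simp
  ring

lemma aux_alg2 {α D q cc : ℝ} (hD : D ≠ 0) (hcc : cc ≠ 0) (hone : (1-α) ≠ 0)
    (h : (1-α)*q/cc = 1 - D) :
    (α / D) * q = (cc/(1-α)) * (α / D) - (cc/(1-α)) * α := by
  have h1 : (α / D) * q = (cc/(1-α)) * (α * ((1-α)*q/cc) / D) := by
    field_simp
  rw [h1, h]
  field_simp

/-- Existence and uniqueness of the nondegenerate fixed point of the normalized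
operator `L_N[w] = α + (1-α)·Q·w/⟨w,Q⟩` on densities w.r.t. `P_ref`:
there is a unique `c* ∈ ((1-α)Q*, Q*]` such that `w*(x) = α/(1-(1-α)Q(x)/c*)`
is a probability density; `⟨w*,Q⟩ = c*`, `w*` is a fixed point of `L_N`, and it
is the unique such fixed point among densities. -/
theorem nondegenerate_fixed_point
    {X : Type*} [MeasurableSpace X] (μ : Measure X) [IsProbabilityMeasure μ]
    (Q : X → ℝ) (hQm : Measurable Q)
    (Qstar : ℝ) (hQstar : 0 < Qstar)
    (hQpos : ∀ x, 0 < Q x) (hQle : ∀ x, Q x ≤ Qstar)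
    (hess : ∀ ε > 0, μ {x | Qstar - ε < Q x} ≠ 0)
    (α : ℝ) (hα : α ∈ Set.Ioo (0 : ℝ) 1)
    (hA3 : (∫⁻ x, ENNReal.ofReal (Qstar / (Qstar - Q x)) ∂μ)⁻¹
            < ENNReal.ofReal α) :
    ∃ c ∈ Set.Ioc ((1 - α) * Qstar) Qstar,
      (∫ x, α / (1 - (1 - α) * Q x / c) ∂μ = 1)
      ∧ (∫ x, (α / (1 - (1 - α) * Q x / c)) * Q x ∂μ = c)
      ∧ (∀ x, α + (1 - α) * Q x * (α / (1 - (1 - α) * Q x / c)) / c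
            = α / (1 - (1 - α) * Q x / c))
      ∧ (∀ c' ∈ Set.Ioc ((1 - α) * Qstar) Qstar,
            (∫ x, α / (1 - (1 - α) * Q x / c') ∂μ = 1) → c' = c)
      ∧ (∀ w : X → ℝ, Measurable w → (∀ x, 0 ≤ w x) → Integrable w μ →
            (∫ x, w x ∂μ = 1) →
            (∀ x, α + (1 - α) * Q x * w x / (∫ y, w y * Q y ∂μ) = w x) →
            ∀ x, w x = α / (1 - (1 - α) * Q x / c)) := by
  obtain ⟨hα0, hα1⟩ := hα
  have hone : (0:ℝ) < 1 - α := by linarith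
  -- existence via IVT
  obtain ⟨c₁, hc₁mem, hc₁gt⟩ := aux_exists_gt (μ := μ) hQm hQstar hα0 hα1 hQpos hQle hA3
  have hfQstar : ∫ x, α / (1 - (1-α)*Q x/Qstar) ∂μ ≤ 1 :=
    aux_f_qstar_le hQm hQstar hα0 hα1 hQpos hQle
  have hcont : ContinuousOn (fun c => ∫ x, α / (1 - (1-α)*Q x/c) ∂μ)
      (Set.Icc c₁ Qstar) := fun c hc =>
    (aux_f_contAt hQm hQstar hα0 hα1 hQpos hQle
      (lt_of_lt_of_le hc₁mem.1 hc.1)).continuousWithinAt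
  have h1mem : (1:ℝ) ∈ Set.Icc (∫ x, α / (1 - (1-α)*Q x/Qstar) ∂μ)
      (∫ x, α / (1 - (1-α)*Q x/c₁) ∂μ) := ⟨hfQstar, le_of_lt hc₁gt⟩
  obtain ⟨c, hcIcc, hfc⟩ := intermediate_value_Icc' hc₁mem.2 hcont h1mem
  simp only at hfc
  have hcb : (1-α)*Qstar < c := lt_of_lt_of_le hc₁mem.1 hcIcc.1
  have hcmem : c ∈ Set.Ioc ((1-α)*Qstar) Qstar := ⟨hcb, hcIcc.2⟩
  have hb0 : (0:ℝ) < (1-α)*Qstar := by nlinarith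
  have hc0 : (0:ℝ) < c := lt_trans hb0 hcb
  have hi := aux_g_int (μ := μ) hQm hα0 hα1 hQpos hQle hcb
  -- uniqueness of c
  have huniq : ∀ c' ∈ Set.Ioc ((1-α)*Qstar) Qstar,
      (∫ x, α / (1 - (1-α)*Q x/c') ∂μ = 1) → c' = c := by
    intro c' hc' h1
    rcases lt_trichotomy c' c with h|h|h
    · exfalso
      have := aux_f_strictanti (μ := μ) hQm hQstar hα0 hα1 hQpos hQle hc'.1 h
      rw [h1, hfc] at this; exact lt_irrefl 1 this
    · exact h
    · exfalso
      have := aux_f_strictanti (μ := μ) hQm hQstar hα0 hα1 hQpos hQle hcb h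
      rw [h1, hfc] at this; exact lt_irrefl 1 this
  -- second bullet: ⟨w*, Q⟩ = c
  have hsecond : ∫ x, (α / (1 - (1-α)*Q x/c)) * Q x ∂μ = c := by
    have hpt : ∀ x, (α / (1 - (1-α)*Q x/c)) * Q x
        = (c/(1-α)) * (α / (1 - (1-α)*Q x/c)) - (c/(1-α)) * α := by
      intro x
      exact aux_alg2 (aux_denom_pos hα1 (hQpos x) (hQle x) hcb).ne' hc0.ne'
        hone.ne' (by ring)
    calc ∫ x, (α / (1 - (1-α)*Q x/c)) * Q x ∂μ
        = ∫ x, ((c/(1-α)) * (α / (1 - (1-α)*Q x/c)) - (c/(1-α)) * α) ∂μ :=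
          integral_congr_ae (Filter.Eventually.of_forall hpt)
      _ = (c/(1-α)) * (∫ x, α / (1 - (1-α)*Q x/c) ∂μ) - (c/(1-α)) * α := by
          rw [integral_sub (hi.const_mul _) (integrable_const _),
            integral_const_mul, integral_const]
          simp
      _ = c := by rw [hfc]; field_simp
  -- third bullet: pointwise fixed point
  have hthird : ∀ x, α + (1-α) * Q x * (α / (1 - (1-α)*Q x/c)) / c
      = α / (1 - (1-α)*Q x/c) := by
    intro x
    exact aux_alg1 (aux_denom_pos hα1 (hQpos x) (hQle x) hcb).ne' hc0.ne' (by ring)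
  refine ⟨c, hcmem, hfc, hsecond, hthird, huniq, ?_⟩
  -- uniqueness of fixed point
  intro w hwm hw0 hwint hwnorm hwfix
  set c' := ∫ y, w y * Q y ∂μ with hc'def
  have hc'nonneg : 0 ≤ c' := integral_nonneg fun y => mul_nonneg (hw0 y) (hQpos y).le
  have hc'ne : c' ≠ 0 := by
    intro h
    have hwa : ∀ x, w x = α := by
      intro x
      have hx := hwfix x
      rw [h, div_zero, add_zero] at hx
      exact hx.symm
    rw [integral_congr_ae (Filter.Eventually.of_forall hwa), integral_const] at hwnorm
    simp at hwnorm
    linarith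
  have hc'pos : 0 < c' := hc'nonneg.lt_of_ne (Ne.symm hc'ne)
  have hkey : ∀ x, w x * (1 - (1-α)*Q x/c') = α := by
    intro x
    have h1 := hwfix x
    have h2 : w x * (1 - (1-α)*Q x/c') = w x - (1-α)*Q x*w x/c' := by ring
    rw [h2]; linarith
  have hwpos : ∀ x, 0 < w x := by
    intro x
    rcases (hw0 x).lt_or_eq with h|h
    · exact h
    · exfalso; have := hkey x; rw [← h, zero_mul] at this; linarith
  have hDpos : ∀ x, 0 < 1 - (1-α)*Q x/c' := by
    intro x
    have hD : 1 - (1-α)*Q x/c' = α / w x := by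
      rw [eq_div_iff (hwpos x).ne', mul_comm]; exact hkey x
    rw [hD]; exact div_pos hα0 (hwpos x)
  have hwx : ∀ x, w x = α / (1 - (1-α)*Q x/c') := by
    intro x; rw [eq_div_iff (hDpos x).ne']; exact hkey x
  have hQlt : ∀ x, (1-α)*Q x < c' := by
    intro x
    have h := hDpos x
    rw [sub_pos] at h
    exact (div_lt_one hc'pos).mp h
  -- c' ≤ Qstar
  have hwQ_int : Integrable (fun y => w y * Q y) μ := by
    apply Integrable.mono' (hwint.const_mul Qstar) (hwm.mul hQm).aestronglyMeasurable
    filter_upwards with y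
    rw [Real.norm_eq_abs, Pi.mul_apply, abs_of_nonneg (mul_nonneg (hw0 y) (hQpos y).le)]
    calc w y * Q y ≤ w y * Qstar := mul_le_mul_of_nonneg_left (hQle y) (hw0 y)
      _ = Qstar * w y := mul_comm _ _
  have hc'le : c' ≤ Qstar := by
    have h := integral_mono hwQ_int (hwint.const_mul Qstar)
      (fun y => by
        calc w y * Q y ≤ w y * Qstar := mul_le_mul_of_nonneg_left (hQle y) (hw0 y)
          _ = Qstar * w y := mul_comm _ _)
    rw [integral_const_mul, hwnorm, mul_one] at h
    exact h
  -- c' > (1-α)Qstar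
  have hc'b : (1-α)*Qstar < c' := by
    rcases lt_trichotomy c' ((1-α)*Qstar) with h|h|h
    · exfalso
      have hQx : ∀ x, Q x ≤ c'/(1-α) := fun x =>
        le_of_lt ((lt_div_iff₀ hone).mpr (by linarith [hQlt x, mul_comm (Q x) (1-α)]))
      have hεpos : 0 < Qstar - c'/(1-α) := by
        have : c'/(1-α) < Qstar := by rw [div_lt_iff₀ hone]; nlinarith
        linarith
      apply hess (Qstar - c'/(1-α)) hεpos
      have hempty : {x | Qstar - (Qstar - c'/(1-α)) < Q x} = ∅ := by
        ext x
        simp only [Set.mem_setOf_eq, Set.mem_empty_iff_false, iff_false, not_lt]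
        have := hQx x; linarith
      rw [hempty]; exact measure_empty
    · exfalso
      have hQxlt : ∀ x, Q x < Qstar := by
        intro x
        have h1 := hQlt x
        rw [h] at h1; nlinarith
      have hpt : ∀ x, Qstar/(Qstar - Q x) = w x / α := by
        intro x
        have h1 : Qstar - Q x ≠ 0 := by have := hQxlt x; intro hh; linarith
        rw [hwx x, h]
        have hd : 1 - (1-α)*Q x/((1-α)*Qstar) = (Qstar - Q x)/Qstar := by
          field_simp
        rw [hd]
        field_simp
      have hL : (∫⁻ x, ENNReal.ofReal (Qstar / (Qstar - Q x)) ∂μ)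
          = ENNReal.ofReal (1/α) := by
        have hi2 : Integrable (fun x => w x / α) μ := hwint.div_const α
        rw [lintegral_congr_ae (Filter.Eventually.of_forall
          (fun x => by rw [hpt x] : ∀ x, ENNReal.ofReal (Qstar/(Qstar - Q x))
            = ENNReal.ofReal (w x / α)))]
        rw [← MeasureTheory.ofReal_integral_eq_lintegral_ofReal hi2
          (Filter.Eventually.of_forall fun x => div_nonneg (hw0 x) hα0.le)]
        congr 1
        rw [integral_div, hwnorm, one_div]
      rw [hL, one_div, ENNReal.ofReal_inv_of_pos hα0, inv_inv] at hA3
      exact lt_irrefl _ hA3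
    · exact h
  -- conclude
  have h1 : ∫ x, α / (1 - (1-α)*Q x/c') ∂μ = 1 := by
    rw [← integral_congr_ae (Filter.Eventually.of_forall hwx)]
    exact hwnorm
  have := huniq c' ⟨hc'b, hc'le⟩ h1
  intro x
  rw [hwx x, this]
end
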